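/- arXiv:1009.2085 — 3 statements merged into one kernel-verified Lean document; each statement's English description precedes it below -/
import Mathlib

section
/- Let (M, π) be a Poisson manifold, V_π a Poisson spray with flow φ_t, ∇ a torsion-free classical connection on TM, and a(t) = φ_t(ξ) a cotangent path with base γ. If V is a horizontal tangent vector field along a (with respect to ∇) with projection V̄ = (dp)(V) along γ, then dp(L_{V_π}(V)) = ∇̄_a(V̄), where ∇̄ is the contravariant connection on TM induced by ∇ and L_{V_π}(V)(t) = d/ds|_{s=0} (dφ_{−s})_{a(s+t)}(V(s+t)). Consequently, for an arbitrary tangent vector field V along a with components (V̄, θ_V), dp(L_{V_π}(V)) = −π♯(θ_V) + ∇̄_a(V̄). -/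
/-!
Formalization framework for "On the existence of symplectic realizations"
(Crainic–Mărcuț).  We work on a chart: the Poisson manifold is an open set
`U ⊆ ℝⁿ` (with `Vec n := Fin n → ℝ`), its cotangent bundle is
`T*U = U × ℝⁿ ⊆ Pt n := Vec n × Vec n`, with bundle projection `Prod.fst`.
A bivector field is given by its components `Pb x p q = π_{pq}(x)`, a classical
connection on `TM` by its Christoffel symbols `Γ x p q r = Γ_{pq}^r(x)`.
-/

noncomputable section
open Set

namespace PoissonPaper

abbrev Vec (n : ℕ) := Fin n → ℝ
abbrev Pt (n : ℕ) := Vec n × Vec n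

variable {n : ℕ}

/-- Partial derivative `∂_l f (x)`. -/
def pd (l : Fin n) (f : Vec n → ℝ) (x : Vec n) : ℝ :=
  fderiv ℝ f x (Pi.single l 1)

/-- The bundle map `π♯ : T*M → TM`, `β(π♯ α) = π(α, β)`;
in components `(π♯ ξ)_q = ∑_p π_{pq} ξ_p`. -/
def sharp (Pb : Vec n → Fin n → Fin n → ℝ) (x ξ : Vec n) : Vec n :=
  fun q => ∑ p, Pb x p q * ξ p

/-- The Jacobiator of the bivector `Pb` on the coordinate functions:
`{{x_j,x_k},x_i} + {{x_k,x_i},x_j} + {{x_i,x_j},x_k}`; `π` is Poisson iff it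
vanishes. -/
def jacobiator (Pb : Vec n → Fin n → Fin n → ℝ) (x : Vec n) (i j k : Fin n) : ℝ :=
  ∑ l, (Pb x l i * pd l (fun y => Pb y j k) x
      + Pb x l j * pd l (fun y => Pb y k i) x
      + Pb x l k * pd l (fun y => Pb y i j) x)

/-- Components of the Schouten bracket `[π, π]` (with the convention
`[π,π](df,dg,dh) = 2({f,{g,h}} + {g,{h,f}} + {h,{f,g}})`). -/
def schouten (Pb : Vec n → Fin n → Fin n → ℝ) (x : Vec n) (i j k : Fin n) : ℝ :=
  -(2 * jacobiator Pb x i j k)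

/-- `Pb` is a smooth bivector field (an antisymmetric 2-tensor) on `U`. -/
def IsBivectorOn (U : Set (Vec n)) (Pb : Vec n → Fin n → Fin n → ℝ) : Prop :=
  (∀ p q, ContDiffOn ℝ (⊤ : ℕ∞) (fun x => Pb x p q) U) ∧
  (∀ x ∈ U, ∀ p q, Pb x q p = - Pb x p q)

/-- `Pb` is a Poisson bivector on `U` : a bivector with `[π,π] = 0`
(the Jacobi identity). -/
def IsPoissonOn (U : Set (Vec n)) (Pb : Vec n → Fin n → Fin n → ℝ) : Prop :=
  IsBivectorOn U Pb ∧ ∀ x ∈ U, ∀ i j k, jacobiator Pb x i j k = 0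

/-- A Poisson spray for `(U, π)`: a (smooth) vector field `V` on `T*U = U × ℝⁿ`
such that `(dp)_ξ(V_ξ) = π♯(ξ)` and `m_t^*(V) = t V` for all `t > 0`
(the latter written as `(dm_t)(t • V_ξ) = V(m_t ξ)`, where `m_t(x,y) = (x,t•y)`
and `dm_t(v,θ) = (v, t•θ)`). -/
structure IsSpray (U : Set (Vec n)) (Pb : Vec n → Fin n → Fin n → ℝ)
    (V : Pt n → Pt n) : Prop where
  smooth : ContDiffOn ℝ (⊤ : ℕ∞) V (U ×ˢ (univ : Set (Vec n)))
  base : ∀ ξ : Pt n, ξ.1 ∈ U → (V ξ).1 = sharp Pb ξ.1 ξ.2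
  homog : ∀ t : ℝ, 0 < t → ∀ ξ : Pt n, ξ.1 ∈ U →
    V (ξ.1, t • ξ.2) = (t • (V ξ).1, t • t • (V ξ).2)

/-- A local flow `φ` of the vector field `V` on `T*U = U × ℝⁿ ⊆ Pt n`, with
open domain `D ⊆ ℝ × Pt n`. -/
structure IsLocalFlow (U : Set (Vec n)) (V : Pt n → Pt n)
    (D : Set (ℝ × Pt n)) (φ : ℝ → Pt n → Pt n) : Prop where
  isOpen_dom : IsOpen D
  mem_zero : ∀ ξ : Pt n, ξ.1 ∈ U → ((0 : ℝ), ξ) ∈ D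
  init : ∀ ξ : Pt n, φ 0 ξ = ξ
  interval : ∀ (t : ℝ) (ξ : Pt n), (t, ξ) ∈ D → ∀ s ∈ uIcc (0:ℝ) t, (s, ξ) ∈ D
  invariant : ∀ (t : ℝ) (ξ : Pt n), (t, ξ) ∈ D → (φ t ξ).1 ∈ U
  hasDeriv : ∀ (t : ℝ) (ξ : Pt n), (t, ξ) ∈ D →
    HasDerivAt (fun s => φ s ξ) (V (φ t ξ)) t
  group : ∀ (s t : ℝ) (ξ : Pt n), (t, ξ) ∈ D → (s, φ t ξ) ∈ D →
    (s + t, ξ) ∈ D ∧ φ s (φ t ξ) = φ (s + t) ξ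

/-- The canonical symplectic form `ω_can = ∑ dx_i ∧ dy_i` of `T*ℝⁿ = ℝⁿ × ℝⁿ`
(constant coefficients): `ω_can(v, w) = ⟨θ_w, v̄⟩ - ⟨θ_v, w̄⟩`. -/
def omegaCan (v w : Pt n) : ℝ := ∑ i, (w.2 i * v.1 i - v.2 i * w.1 i)

/-- The 2-form `ω := ∫₀¹ (φ_t)^* ω_can dt`. -/
def omegaInt (φ : ℝ → Pt n → Pt n) (ξ v w : Pt n) : ℝ :=
  ∫ t in (0:ℝ)..1, omegaCan (fderiv ℝ (φ t) ξ v) (fderiv ℝ (φ t) ξ w)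

/-- Nondegeneracy of a 2-form at a point. -/
def Nondeg (ω : Pt n → Pt n → Pt n → ℝ) (ξ : Pt n) : Prop :=
  ∀ v : Pt n, (∀ w : Pt n, ω ξ v w = 0) → v = 0

/-- Closedness of a 2-form on `S` (`dω = 0`, expressed on constant vector
fields). -/
def ClosedOn (S : Set (Pt n)) (ω : Pt n → Pt n → Pt n → ℝ) : Prop :=
  ∀ ξ ∈ S, ∀ u v w : Pt n,
    fderiv ℝ (fun η => ω η v w) ξ u - fderiv ℝ (fun η => ω η u w) ξ v
      + fderiv ℝ (fun η => ω η u v) ξ w = 0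

/-- `ω` is a symplectic form on `S`: a smooth, bilinear, antisymmetric,
closed, nondegenerate 2-form. -/
def IsSymplecticOn (S : Set (Pt n)) (ω : Pt n → Pt n → Pt n → ℝ) : Prop :=
  (∀ ξ ∈ S, ∀ v w : Pt n, ω ξ w v = - ω ξ v w) ∧
  (∀ ξ ∈ S, ∀ (a b : ℝ) (v v' w : Pt n),
      ω ξ (a • v + b • v') w = a * ω ξ v w + b * ω ξ v' w) ∧
  (∀ v w : Pt n, ContDiffOn ℝ (⊤ : ℕ∞) (fun ξ => ω ξ v w) S) ∧
  ClosedOn S ω ∧ (∀ ξ ∈ S, Nondeg ω ξ)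

/-- The projection `p = Prod.fst : (S, ω) → (U, π)` is a Poisson map: for each
`ξ ∈ S` and `θ ∈ T*_{p(ξ)}M`, any `v` with `i_v ω = p^*θ` at `ξ` satisfies
`(dp)_ξ(v) = π♯(θ)`; i.e. the bivector inverse to `ω` pushes forward to `π`. -/
def FstIsPoissonMap (S : Set (Pt n)) (Pb : Vec n → Fin n → Fin n → ℝ)
    (ω : Pt n → Pt n → Pt n → ℝ) : Prop :=
  ∀ ξ ∈ S, ∀ θ : Vec n, ∀ v : Pt n,
    (∀ w : Pt n, ω ξ v w = ∑ i, θ i * w.1 i) → v.1 = sharp Pb ξ.1 θ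

/-- Lie bracket of vector fields on `ℝⁿ` (in components). -/
def lieVF (X Y : Vec n → Vec n) (x : Vec n) : Vec n :=
  fun q => ∑ p, (X x p * pd p (fun y => Y y q) x - Y x p * pd p (fun y => X y q) x)

/-- Lie derivative of a 1-form `β` along a vector field `X` (in components):
`(L_X β)_r = ∑_p (X_p ∂_p β_r + β_p ∂_r X_p)`. -/
def lieDer1 (X β : Vec n → Vec n) (x : Vec n) : Vec n :=
  fun r => ∑ p, (X x p * pd p (fun y => β y r) x + β x p * pd r (fun y => X y p) x)

/-- The pairing `π(α, β)`. -/
def pbPair (Pb : Vec n → Fin n → Fin n → ℝ) (α β : Vec n → Vec n) (x : Vec n) : ℝ :=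
  ∑ p, ∑ q, Pb x p q * α x p * β x q

/-- The Koszul bracket `[α, β]_π = L_{π♯α} β − L_{π♯β} α − d(π(α,β))` on
1-forms. -/
def koszul (Pb : Vec n → Fin n → Fin n → ℝ) (α β : Vec n → Vec n) (x : Vec n) :
    Vec n :=
  fun r => lieDer1 (fun y => sharp Pb y (α y)) β x r
         - lieDer1 (fun y => sharp Pb y (β y)) α x r
         - pd r (pbPair Pb α β) x

/-- The Lie derivative `L_{π♯α}(f)` of a function along `π♯α`. -/
def LDer (Pb : Vec n → Fin n → Fin n → ℝ) (α : Vec n → Vec n) (f : Vec n → ℝ)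
    (x : Vec n) : ℝ :=
  ∑ q, sharp Pb x (α x) q * pd q f x

/-- Classical covariant derivative of a 1-form `α` along a vector field `X`,
for the connection dual to the one on `TM` with Christoffel symbols `Γ`:
`(∇_X α)_q = ∑_p X_p ∂_p α_q − ∑_{p,r} Γ_{pq}^r X_p α_r`. -/
def covD1 (Γ : Vec n → Fin n → Fin n → Fin n → ℝ) (X α : Vec n → Vec n)
    (x : Vec n) : Vec n :=
  fun q => (∑ p, X x p * pd p (fun y => α y q) x)
         - ∑ p, ∑ r, Γ x p q r * X x p * α x r

/-- The contravariant connection `∇̄` on `TM` induced by a classical connection: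
`∇̄_α(V) = π♯(∇_V α) + [π♯α, V]`. -/
def nbarVF (Pb : Vec n → Fin n → Fin n → ℝ)
    (Γ : Vec n → Fin n → Fin n → Fin n → ℝ)
    (α X : Vec n → Vec n) (x : Vec n) : Vec n :=
  fun s => (∑ q, Pb x q s * covD1 Γ X α x q)
         + lieVF (fun y => sharp Pb y (α y)) X x s

/-- The contravariant connection `∇̄` on `T*M` induced by a classical
connection: `∇̄_α(β) = ∇_{π♯β}(α) + [α, β]_π`. -/
def nbar1F (Pb : Vec n → Fin n → Fin n → ℝ)
    (Γ : Vec n → Fin n → Fin n → Fin n → ℝ)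
    (α β : Vec n → Vec n) (x : Vec n) : Vec n :=
  fun r => covD1 Γ (fun y => sharp Pb y (β y)) α x r + koszul Pb α β x r

/-- Connection coefficients of `∇̄` on `TM`: `(∇̄_{dx_p} ∂_q)^r`. -/
def GbarTM (Pb : Vec n → Fin n → Fin n → ℝ)
    (Γ : Vec n → Fin n → Fin n → Fin n → ℝ) (x : Vec n) (p q r : Fin n) : ℝ :=
  -(∑ s, Pb x s r * Γ x q s p) - pd q (fun y => Pb y p r) x

/-- Connection coefficients of `∇̄` on `T*M`: `(∇̄_{dx_p} dx_q)_r`. -/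
def GbarT1 (Pb : Vec n → Fin n → Fin n → ℝ)
    (Γ : Vec n → Fin n → Fin n → Fin n → ℝ) (x : Vec n) (p q r : Fin n) : ℝ :=
  pd r (fun y => Pb y p q) x - ∑ s, Pb x q s * Γ x s r p

/-- Connection coefficients of the contravariant connection `∇_α := ∇_{π♯α}`
on `T*M`: `(∇_{π♯ dx_p} dx_q)_r`. -/
def Gplain (Pb : Vec n → Fin n → Fin n → ℝ)
    (Γ : Vec n → Fin n → Fin n → Fin n → ℝ) (x : Vec n) (p q r : Fin n) : ℝ :=
  -(∑ s, Pb x p s * Γ x s r q)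

/-- Derivative of a path `u` (of tangent or cotangent vectors) along a
cotangent path with covector components `a` over base path `γ`, for a
contravariant connection with coefficients `G` (so `(∇_a u)_r = u̇_r +
∑_{p,q} a_p u_q G_{pq}^r`). -/
def covAlong (G : Vec n → Fin n → Fin n → Fin n → ℝ) (a γ : ℝ → Vec n)
    (u : ℝ → Vec n) (t : ℝ) : Vec n :=
  fun r => deriv (fun s => u s r) t + ∑ p, ∑ q, a t p * u t q * G (γ t) p q r

/-- Vertical component `θ_v = v − hor_ξ(v̄)` of a tangent vector
`v ∈ T_ξ(T*M)` with respect to the classical connection `Γ`. -/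
def vert (Γ : Vec n → Fin n → Fin n → Fin n → ℝ) (ξ v : Pt n) : Vec n :=
  fun q => v.2 q - ∑ p, ∑ r, Γ ξ.1 p q r * v.1 p * ξ.2 r

/-- The horizontal subspace `H_ξ ⊆ T_ξ(T*M)` of the classical connection `Γ`. -/
def Hor (Γ : Vec n → Fin n → Fin n → Fin n → ℝ) (ξ : Pt n) : Set (Pt n) :=
  {u : Pt n | ∀ q, u.2 q = ∑ p, ∑ r, Γ ξ.1 p q r * u.1 p * ξ.2 r}

/-- A contravariant connection on `T*M` over the Poisson manifold `(U, π)`: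
a bilinear operation `(α, β) ↦ ∇_α β` on 1-forms, function-linear in `α` and
satisfying the Leibniz rule `∇_α(fβ) = f ∇_α β + L_{π♯α}(f) β`. -/
structure IsContraConn (U : Set (Vec n)) (Pb : Vec n → Fin n → Fin n → ℝ)
    (C : (Vec n → Vec n) → (Vec n → Vec n) → (Vec n → Vec n)) : Prop where
  addLeft : ∀ (α α' β : Vec n → Vec n), ∀ x ∈ U,
    C (α + α') β x = C α β x + C α' β x
  addRight : ∀ (α β β' : Vec n → Vec n), ∀ x ∈ U,
    C α (β + β') x = C α β x + C α β' x
  smulLeft : ∀ f : Vec n → ℝ, ContDiffOn ℝ (⊤ : ℕ∞) f U →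
    ∀ (α β : Vec n → Vec n), ∀ x ∈ U,
      C (fun y => f y • α y) β x = f x • C α β x
  leibniz : ∀ f : Vec n → ℝ, ContDiffOn ℝ (⊤ : ℕ∞) f U →
    ∀ (α β : Vec n → Vec n), ∀ x ∈ U,
      C α (fun y => f y • β y) x = f x • C α β x + LDer Pb α f x • β x

/-- Christoffel symbols of a contravariant connection:
`∇_{dx_p}(dx_q) = ∑_r Γ_{pq}^r dx_r`. -/
def christ (C : (Vec n → Vec n) → (Vec n → Vec n) → (Vec n → Vec n))
    (x : Vec n) (p q r : Fin n) : ℝ :=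
  C (fun _ => Pi.single p 1) (fun _ => Pi.single q 1) x r

/-- A smooth 1-form on `U` (in components). -/
def Smooth1F (U : Set (Vec n)) (α : Vec n → Vec n) : Prop :=
  ∀ q, ContDiffOn ℝ (⊤ : ℕ∞) (fun x => α x q) U

/-- The pairing `g(α, β)` of a fiber metric on `T*M` with 1-forms. -/
def gPair (g : Vec n → Fin n → Fin n → ℝ) (α β : Vec n → Vec n) (x : Vec n) : ℝ :=
  ∑ p, ∑ q, g x p q * α x p * β x q

set_option maxHeartbeats 1600000

lemma gronwallBound_le_mul {K ε x : ℝ} (hK : 0 ≤ K) (hε : 0 ≤ ε) (hx : 0 ≤ x) :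
    gronwallBound 0 K ε x ≤ ε * (x * Real.exp (K * x)) := by
  rcases eq_or_lt_of_le hK with hK0 | hKpos
  · subst hK0
    have h0 : gronwallBound 0 0 ε x = 0 + ε * x := by rw [gronwallBound_K0]
    have h1 : Real.exp (0 * x) = 1 := by norm_num
    rw [h0, h1]
    nlinarith
  · rw [gronwallBound_of_K_ne_0 (ne_of_gt hKpos)]
    have h1 : Real.exp (K * x) - 1 ≤ (K * x) * Real.exp (K * x) := by
      have h2 := Real.add_one_le_exp (-(K * x))
      have h3 : Real.exp (-(K*x)) = (Real.exp (K*x))⁻¹ := Real.exp_neg _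
      have h4 : (0:ℝ) < Real.exp (K * x) := Real.exp_pos _
      rw [h3] at h2
      have h5 : (Real.exp (K*x))⁻¹ * Real.exp (K*x) = 1 := inv_mul_cancel₀ (ne_of_gt h4)
      nlinarith
    have h6 : ε / K * (Real.exp (K * x) - 1) ≤ ε / K * ((K * x) * Real.exp (K * x)) := by
      apply mul_le_mul_of_nonneg_left h1 (by positivity)
    calc 0 * Real.exp (K * x) + ε / K * (Real.exp (K * x) - 1)
        ≤ ε / K * ((K * x) * Real.exp (K * x)) := by rw [zero_mul, zero_add]; exact h6
      _ = ε * (x * Real.exp (K * x)) := by field_simp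

lemma stay {g gd : ℝ → Pt n} {z : Pt n} {T C ρ δ' : ℝ}
    (hC : 0 ≤ C) (hδ' : 0 ≤ δ') (hT : 0 ≤ T)
    (hg : ∀ σ ∈ Icc (0:ℝ) T, HasDerivAt g (gd σ) σ)
    (hg0 : dist (g 0) z ≤ δ')
    (hbound : ∀ σ ∈ Icc (0:ℝ) T, g σ ∈ Metric.closedBall z ρ → ‖gd σ‖ ≤ C)
    (hsmall : δ' + C * T < ρ) :
    ∀ σ ∈ Icc (0:ℝ) T, dist (g σ) z ≤ δ' + C * σ := by
  set s : Set ℝ := {σ | dist (g σ) z ≤ δ' + C * σ} with hs_def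
  have hgc : ContinuousOn g (Icc 0 T) := fun σ hσ =>
    (hg σ hσ).continuousAt.continuousWithinAt
  have hFc : ContinuousOn (fun σ => δ' + C * σ - dist (g σ) z) (Icc 0 T) := by
    apply ContinuousOn.sub
    · exact (continuous_const.add (continuous_const.mul continuous_id)).continuousOn
    · exact (Continuous.dist continuous_id continuous_const).comp_continuousOn hgc
  have hsc : IsClosed (s ∩ Icc 0 T) := by
    have : s ∩ Icc 0 T = Icc 0 T ∩ (fun σ => δ' + C * σ - dist (g σ) z) ⁻¹' (Ici 0) := by
      ext σ; simp only [mem_inter_iff, mem_setOf_eq, mem_preimage, mem_Ici, hs_def]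
      constructor
      · rintro ⟨h1, h2⟩; exact ⟨h2, by linarith⟩
      · rintro ⟨h1, h2⟩; exact ⟨by linarith, h1⟩
    rw [this]
    exact hFc.preimage_isClosed_of_isClosed isClosed_Icc isClosed_Ici
  have h0 : (0:ℝ) ∈ s := by simpa [hs_def] using hg0
  have hgt : ∀ x ∈ s ∩ Ico 0 T, ∀ y' ∈ Ioi x, (s ∩ Ioc x y').Nonempty := by
    rintro x ⟨hx, hxI⟩ y' hy'
    have hxs : dist (g x) z ≤ δ' + C * x := hx
    have hm : 0 < ρ - (δ' + C * T) := by linarith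
    have hcx : ContinuousAt g x := (hg x ⟨hxI.1, le_of_lt hxI.2⟩).continuousAt
    obtain ⟨h, hh, hcont⟩ := Metric.continuousAt_iff.mp hcx (ρ - (δ' + C * T)) hm
    set y := min (min (x + h / 2) T) y' with hy_def
    have hxy : x < y := lt_min (lt_min (by linarith) hxI.2) hy'
    have hyT : y ≤ T := le_trans (min_le_left _ _) (min_le_right _ _)
    have hyy' : y ≤ y' := min_le_right _ _
    have hball : ∀ τ ∈ Icc x y, g τ ∈ Metric.closedBall z ρ := by
      intro τ hτ
      have hd : dist τ x < h := by
        rw [Real.dist_eq, abs_of_nonneg (by linarith [hτ.1])]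
        have : τ ≤ x + h / 2 := le_trans hτ.2 (le_trans (min_le_left _ _) (min_le_left _ _))
        linarith
      have := hcont hd
      have hCx : C * x ≤ C * T := mul_le_mul_of_nonneg_left (le_of_lt hxI.2) hC
      rw [Metric.mem_closedBall]
      calc dist (g τ) z ≤ dist (g τ) (g x) + dist (g x) z := dist_triangle _ _ _
        _ ≤ (ρ - (δ' + C * T)) + (δ' + C * x) := by linarith [this]
        _ ≤ ρ := by linarith
    have hIccsub : Icc x y ⊆ Icc 0 T := Icc_subset_Icc hxI.1 hyT
    have hmvt : ‖g y - g x‖ ≤ C * ‖y - x‖ := by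
      apply Convex.norm_image_sub_le_of_norm_hasDerivWithin_le
        (f' := gd)
        (fun τ hτ => (hg τ (hIccsub hτ)).hasDerivWithinAt)
        (fun τ hτ => hbound τ (hIccsub hτ) (hball τ hτ))
        (convex_Icc x y) (left_mem_Icc.mpr (le_of_lt hxy)) (right_mem_Icc.mpr (le_of_lt hxy))
    refine ⟨y, ?_, hxy, hyy'⟩
    have hnorm : ‖y - x‖ = y - x := by rw [Real.norm_eq_abs, abs_of_nonneg (by linarith)]
    simp only [hs_def, mem_setOf_eq]
    rw [dist_eq_norm] at hxs ⊢
    rw [hnorm] at hmvt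
    calc ‖g y - z‖ ≤ ‖g y - g x‖ + ‖g x - z‖ := norm_sub_le_norm_sub_add_norm_sub _ _ _
      _ ≤ C * (y - x) + (δ' + C * x) := by linarith
      _ = δ' + C * y := by ring
  intro σ hσ
  exact IsClosed.Icc_subset_of_forall_exists_gt hsc h0 hgt hσ


lemma master {f : Pt n → Pt n} {f' : Pt n → (Pt n →L[ℝ] Pt n)} {X : ℝ → Pt n → Pt n}
    {z : Pt n} {ρ δ ε C L : ℝ}
    (hδ : 0 < δ) (hε : 0 < ε) (hC0 : 0 ≤ C) (hL0 : 0 ≤ L)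
    (hX0 : ∀ y, X 0 y = y)
    (hode : ∀ y ∈ Metric.closedBall z δ, ∀ s ∈ Icc (-ε) ε,
        HasDerivAt (fun σ => X σ y) (f (X s y)) s)
    (hf' : ∀ x ∈ Metric.closedBall z ρ, HasFDerivAt f (f' x) x)
    (hC : ∀ x ∈ Metric.closedBall z ρ, ‖f x‖ ≤ C)
    (hL : ∀ x ∈ Metric.closedBall z ρ, ‖f' x‖ ≤ L)
    (hf'u : ∀ κ, 0 < κ → ∃ η, 0 < η ∧ ∀ x ∈ Metric.closedBall z ρ,
        ∀ x' ∈ Metric.closedBall z ρ, dist x x' ≤ η → ‖f' x - f' x'‖ ≤ κ)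
    (hsmall : δ + C * ε < ρ)
    {r : ℝ} (hr : r ∈ Icc (0:ℝ) ε)
    {P : ℝ → Pt n →L[ℝ] Pt n} (hP0 : P 0 = 1)
    (hPd : ∀ σ ∈ Icc (0:ℝ) r, HasDerivAt P ((f' (X σ z)).comp (P σ)) σ) :
    HasFDerivAt (X r) (P r) z := by
  have hρ0 : 0 < ρ := lt_of_le_of_lt (by positivity) hsmall
  have hzδ : z ∈ Metric.closedBall z δ := Metric.mem_closedBall_self (le_of_lt hδ)
  set ρ' := δ + C * ε with hρ'_def
  have hρ'ρ : ρ' < ρ := hsmall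
  have hρ'0 : 0 < ρ' := by positivity
  have hIccε : Icc (0:ℝ) r ⊆ Icc (-ε) ε := Icc_subset_Icc (by linarith [hε]) hr.2
  -- confinement
  have conf : ∀ y ∈ Metric.closedBall z δ, ∀ σ ∈ Icc (0:ℝ) r,
      X σ y ∈ Metric.closedBall z ρ' := by
    intro y hy σ hσ
    have := stay (g := fun σ => X σ y) (gd := fun σ => f (X σ y)) (z := z)
      (T := r) (C := C) (ρ := ρ) (δ' := δ) hC0 (le_of_lt hδ) hr.1
      (fun τ hτ => hode y hy τ (hIccε hτ))
      (by simpa [hX0 y] using Metric.mem_closedBall.mp hy)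
      (fun τ hτ hmem => hC _ hmem)
      (by nlinarith [hr.2])
      σ hσ
    rw [Metric.mem_closedBall]
    calc dist (X σ y) z ≤ δ + C * σ := this
      _ ≤ ρ' := by nlinarith [hσ.1, hσ.2, hr.2]
  have hsubρ : Metric.closedBall z ρ' ⊆ Metric.closedBall z ρ :=
    Metric.closedBall_subset_closedBall (le_of_lt hρ'ρ)
  -- first Gronwall estimate: distance of trajectories
  have gron1 : ∀ y ∈ Metric.closedBall z δ, ∀ σ ∈ Icc (0:ℝ) r,
      ‖X σ y - X σ z‖ ≤ ‖y - z‖ * Real.exp (L * σ) := by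
    intro y hy σ hσ
    have hcont : ContinuousOn (fun τ => X τ y - X τ z) (Icc 0 r) := fun τ hτ =>
      (((hode y hy τ (hIccε hτ)).sub (hode z hzδ τ (hIccε hτ))).continuousAt).continuousWithinAt
    have hderiv : ∀ τ ∈ Ico (0:ℝ) r, HasDerivWithinAt (fun τ => X τ y - X τ z)
        (f (X τ y) - f (X τ z)) (Ici τ) τ := fun τ hτ =>
      (((hode y hy τ (hIccε (Ico_subset_Icc_self hτ))).sub
        (hode z hzδ τ (hIccε (Ico_subset_Icc_self hτ)))).hasDerivWithinAt)
    have hbd : ∀ τ ∈ Ico (0:ℝ) r, ‖f (X τ y) - f (X τ z)‖ ≤ L * ‖X τ y - X τ z‖ + 0 := by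
      intro τ hτ
      rw [add_zero]
      exact Convex.norm_image_sub_le_of_norm_hasFDerivWithin_le
        (fun x hx => (hf' x hx).hasFDerivWithinAt) hL (convex_closedBall z ρ)
        (hsubρ (conf z hzδ τ (Ico_subset_Icc_self hτ)))
        (hsubρ (conf y hy τ (Ico_subset_Icc_self hτ)))
    have h0 : ‖X 0 y - X 0 z‖ ≤ ‖y - z‖ := by rw [hX0, hX0]
    have := norm_le_gronwallBound_of_norm_deriv_right_le hcont hderiv h0 hbd σ hσ
    rwa [gronwallBound_ε0, sub_zero] at this
  -- main estimate
  rw [hasFDerivAt_iff_isLittleO_nhds_zero]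
  rw [Asymptotics.isLittleO_iff]
  intro c hc
  set CC := Real.exp (L * ε) * (ε * Real.exp (L * ε)) with hCC_def
  have hCC0 : 0 ≤ CC := by positivity
  set κ := c / (CC + 1) with hκ_def
  have hκ0 : 0 < κ := by positivity
  obtain ⟨η₀, hη₀, hηprop⟩ := hf'u κ hκ0
  set η := min η₀ (ρ - ρ') with hη_def
  have hη : 0 < η := lt_min hη₀ (by linarith)
  set w := min δ (η / Real.exp (L * ε)) with hw_def
  have hw0 : 0 < w := lt_min hδ (by positivity)
  filter_upwards [Metric.ball_mem_nhds (0 : Pt n) hw0] with h hmem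
  set y := z + h with hy_def
  have hyz : y - z = h := by rw [hy_def]; abel
  have hynorm : ‖y - z‖ < w := by rw [hyz]; simpa [dist_eq_norm] using hmem
  have hyδ : y ∈ Metric.closedBall z δ := by
    rw [Metric.mem_closedBall, dist_eq_norm]
    exact le_trans (le_of_lt hynorm) (min_le_left _ _)
  have hyη : ‖y - z‖ * Real.exp (L * ε) ≤ η := by
    have h1 : ‖y - z‖ ≤ η / Real.exp (L * ε) := le_trans (le_of_lt hynorm) (min_le_right _ _)
    have h2 : (0:ℝ) < Real.exp (L * ε) := Real.exp_pos _
    rw [le_div_iff₀ h2] at h1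
    exact h1
  -- Δ bound with exp(L ε)
  have hΔ : ∀ σ ∈ Icc (0:ℝ) r, ‖X σ y - X σ z‖ ≤ ‖y - z‖ * Real.exp (L * ε) := by
    intro σ hσ
    refine le_trans (gron1 y hyδ σ hσ) ?_
    apply mul_le_mul_of_nonneg_left _ (norm_nonneg _)
    exact Real.exp_le_exp.mpr (mul_le_mul_of_nonneg_left (le_trans hσ.2 hr.2) hL0)
  set R : ℝ → Pt n := fun σ => X σ y - X σ z - P σ (y - z) with hR_def
  have hRd : ∀ σ ∈ Icc (0:ℝ) r, HasDerivAt R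
      (f (X σ y) - f (X σ z) - (f' (X σ z)) (P σ (y - z))) σ := by
    intro σ hσ
    have h1 := (hode y hyδ σ (hIccε hσ)).sub (hode z hzδ σ (hIccε hσ))
    have h2 := (hPd σ hσ).clm_apply (hasDerivAt_const σ (y - z))
    have h2' : HasDerivAt (fun τ => P τ (y - z)) ((f' (X σ z)) ((P σ) (y - z))) σ := by
      simpa using h2
    exact h1.sub h2'
  have hRbd : ∀ σ ∈ Ico (0:ℝ) r, ‖f (X σ y) - f (X σ z) - (f' (X σ z)) (P σ (y - z))‖
      ≤ L * ‖R σ‖ + κ * (‖y - z‖ * Real.exp (L * ε)) := by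
    intro σ hσ
    have hσ' : σ ∈ Icc (0:ℝ) r := Ico_subset_Icc_self hσ
    have hPval : P σ (y - z) = (X σ y - X σ z) - R σ := by
      have hRσ : R σ = X σ y - X σ z - P σ (y - z) := rfl
      rw [hRσ]; abel
    have hXσz : X σ z ∈ Metric.closedBall z ρ := hsubρ (conf z hzδ σ hσ')
    have hXσy : X σ y ∈ Metric.closedBall z ρ := hsubρ (conf y hyδ σ hσ')
    -- Taylor estimate on a small ball around X σ z
    have hsmallball : Metric.closedBall (X σ z) (‖X σ y - X σ z‖) ⊆ Metric.closedBall z ρ := by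
      intro x hx
      rw [Metric.mem_closedBall] at hx ⊢
      have h5 : dist (X σ z) z ≤ ρ' := Metric.mem_closedBall.mp (conf z hzδ σ hσ')
      have h6 : ‖X σ y - X σ z‖ ≤ η := le_trans (hΔ σ hσ') hyη
      have h7 : η ≤ ρ - ρ' := min_le_right _ _
      calc dist x z ≤ dist x (X σ z) + dist (X σ z) z := dist_triangle _ _ _
        _ ≤ η + ρ' := by linarith [hx]
        _ ≤ ρ := by linarith
    have htay : ‖f (X σ y) - f (X σ z) - (f' (X σ z)) (X σ y - X σ z)‖
        ≤ κ * ‖X σ y - X σ z‖ := by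
      apply Convex.norm_image_sub_le_of_norm_hasFDerivWithin_le'
        (fun x hx => (hf' x (hsmallball hx)).hasFDerivWithinAt)
        (fun x hx => by
          apply hηprop x (hsmallball hx) (X σ z) hXσz
          have h8 := Metric.mem_closedBall.mp hx
          have hyη₀ : ‖y - z‖ * Real.exp (L * ε) ≤ η₀ := le_trans hyη (min_le_left _ _)
          exact le_trans h8 (le_trans (hΔ σ hσ') hyη₀))
        (convex_closedBall _ _)
        (Metric.mem_closedBall_self (norm_nonneg _))
        (by rw [Metric.mem_closedBall, dist_eq_norm])
    have hlin : ‖(f' (X σ z)) (R σ)‖ ≤ L * ‖R σ‖ := by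
      calc ‖(f' (X σ z)) (R σ)‖ ≤ ‖f' (X σ z)‖ * ‖R σ‖ := ContinuousLinearMap.le_opNorm _ _
        _ ≤ L * ‖R σ‖ := mul_le_mul_of_nonneg_right (hL _ hXσz) (norm_nonneg _)
    have hrw : f (X σ y) - f (X σ z) - (f' (X σ z)) (P σ (y - z))
        = (f (X σ y) - f (X σ z) - (f' (X σ z)) (X σ y - X σ z)) + (f' (X σ z)) (R σ) := by
      rw [hPval, map_sub]; abel
    rw [hrw]
    calc ‖_ + _‖ ≤ _ + _ := norm_add_le _ _
      _ ≤ κ * ‖X σ y - X σ z‖ + L * ‖R σ‖ := add_le_add htay hlin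
      _ ≤ κ * (‖y - z‖ * Real.exp (L * ε)) + L * ‖R σ‖ := by
          have := hΔ σ hσ'
          nlinarith [hκ0.le, this]
      _ = L * ‖R σ‖ + κ * (‖y - z‖ * Real.exp (L * ε)) := by ring
  have hR0 : ‖R 0‖ ≤ 0 := by
    rw [hR_def]
    simp [hX0, hP0]
  have hRcont : ContinuousOn R (Icc 0 r) := fun σ hσ =>
    ((hRd σ hσ).continuousAt).continuousWithinAt
  have gron2 := norm_le_gronwallBound_of_norm_deriv_right_le hRcont
    (fun σ hσ => (hRd σ (Ico_subset_Icc_self hσ)).hasDerivWithinAt)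
    hR0 hRbd r (right_mem_Icc.mpr hr.1)
  have hfinal : ‖R r‖ ≤ κ * CC * ‖y - z‖ := by
    have h1 := gronwallBound_le_mul (K := L) (ε := κ * (‖y - z‖ * Real.exp (L * ε)))
      (x := r - 0) hL0 (by positivity) (by linarith [hr.1])
    have h2 : (r - 0) * Real.exp (L * (r - 0)) ≤ ε * Real.exp (L * ε) := by
      have hr' : r ≤ ε := hr.2
      have he : Real.exp (L * r) ≤ Real.exp (L * ε) :=
        Real.exp_le_exp.mpr (mul_le_mul_of_nonneg_left hr' hL0)
      have h0r : 0 ≤ r := hr.1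
      rw [sub_zero]
      nlinarith [Real.exp_pos (L * r)]
    calc ‖R r‖ ≤ gronwallBound 0 L (κ * (‖y - z‖ * Real.exp (L * ε))) (r - 0) := gron2
      _ ≤ (κ * (‖y - z‖ * Real.exp (L * ε))) * ((r - 0) * Real.exp (L * (r - 0))) := h1
      _ ≤ (κ * (‖y - z‖ * Real.exp (L * ε))) * (ε * Real.exp (L * ε)) := by
          apply mul_le_mul_of_nonneg_left h2 (by positivity)
      _ = κ * CC * ‖y - z‖ := by rw [hCC_def]; ring
  have hκCC : κ * CC ≤ c := by
    rw [hκ_def]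
    rw [div_mul_eq_mul_div, div_le_iff₀ (by positivity)]
    nlinarith [hc.le, hCC0]
  rw [hyz] at hfinal
  have hEq : X r y - X r z - (P r) h = R r := by
    have h9 : R r = X r y - X r z - P r (y - z) := rfl
    rw [h9, hyz]
  rw [hEq]
  exact le_trans hfinal (mul_le_mul_of_nonneg_right hκCC (norm_nonneg _))


lemma key_hasDerivAt {n : ℕ}
    (U : Set (Vec n)) (hU : IsOpen U)
    (V : Pt n → Pt n) (hVs : ContDiffOn ℝ (⊤ : ℕ∞) V (U ×ˢ (univ : Set (Vec n))))
    (D : Set (ℝ × Pt n)) (φ : ℝ → Pt n → Pt n) (hφ : IsLocalFlow U V D φ)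
    (ξ : Pt n) (t : ℝ) (htD : (t, ξ) ∈ D)
    (W : ℝ → Pt n) (hW : Differentiable ℝ W) :
    HasDerivAt (fun s => fderiv ℝ (φ (-s)) (φ (t + s) ξ) (W (t + s)))
      (deriv W t - (fderiv ℝ V (φ t ξ)) (W t)) 0 := by
  classical
  set c := φ t ξ with hc_def
  have hcU : c.1 ∈ U := hφ.invariant t ξ htD
  have hO : IsOpen (U ×ˢ (univ : Set (Vec n))) := hU.prod isOpen_univ
  have hcO : c ∈ U ×ˢ (univ : Set (Vec n)) := ⟨hcU, mem_univ _⟩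
  -- box inside the domain D around (0,c)
  have h0D : ((0:ℝ), c) ∈ D := hφ.mem_zero c hcU
  obtain ⟨ε₁, hε₁, hbox⟩ : ∃ ε₁ > (0:ℝ), ∀ s : ℝ, ∀ y : Pt n,
      |s| < ε₁ → dist y c < ε₁ → (s, y) ∈ D := by
    obtain ⟨ε₁, hε₁0, hsub⟩ := Metric.isOpen_iff.mp hφ.isOpen_dom (0, c) h0D
    refine ⟨ε₁, hε₁0, fun s y hs hy => hsub ?_⟩
    rw [Metric.mem_ball, Prod.dist_eq]
    rw [max_lt_iff]
    constructor
    · rwa [Real.dist_eq, sub_zero]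
    · exact hy
  -- region radius
  obtain ⟨ρ, hρ0, hρsub, hρε₁⟩ : ∃ ρ > (0:ℝ),
      Metric.closedBall c ρ ⊆ U ×ˢ (univ : Set (Vec n)) ∧ ρ ≤ ε₁ / 2 := by
    obtain ⟨ρ₀, hρ₀0, hsub⟩ := Metric.isOpen_iff.mp hO c hcO
    refine ⟨min (ρ₀ / 2) (ε₁ / 2), lt_min (by linarith) (by linarith), ?_, min_le_right _ _⟩
    refine subset_trans (Metric.closedBall_subset_ball ?_) hsub
    calc min (ρ₀ / 2) (ε₁ / 2) ≤ ρ₀ / 2 := min_le_left _ _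
      _ < ρ₀ := by linarith
  have hKc : IsCompact (Metric.closedBall c ρ) := isCompact_closedBall c ρ
  have hVcont : ContinuousOn V (Metric.closedBall c ρ) := hVs.continuousOn.mono hρsub
  obtain ⟨C₀, hC₀⟩ := hKc.exists_bound_of_continuousOn hVcont
  set C := max C₀ 0 with hC_def
  have hC0 : (0:ℝ) ≤ C := le_max_right _ _
  have hCb : ∀ x ∈ Metric.closedBall c ρ, ‖V x‖ ≤ C := fun x hx =>
    le_trans (hC₀ x hx) (le_max_left _ _)
  -- derivative of V
  have hdiff : ∀ x ∈ Metric.closedBall c ρ, HasFDerivAt V (fderiv ℝ V x) x := by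
    intro x hx
    have hx' : x ∈ U ×ˢ (univ : Set (Vec n)) := hρsub hx
    have h1 : ContDiffAt ℝ (⊤ : ℕ∞) V x := hVs.contDiffAt (hO.mem_nhds hx')
    exact (h1.differentiableAt (by simp)).hasFDerivAt
  have hDfcont : ContinuousOn (fderiv ℝ V) (Metric.closedBall c ρ) :=
    (hVs.continuousOn_fderiv_of_isOpen hO (by exact_mod_cast le_top)).mono hρsub
  obtain ⟨L₀, hL₀⟩ := hKc.exists_bound_of_continuousOn hDfcont
  set L := max L₀ 0 with hL_def
  have hL0 : (0:ℝ) ≤ L := le_max_right _ _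
  have hLb : ∀ x ∈ Metric.closedBall c ρ, ‖fderiv ℝ V x‖ ≤ L := fun x hx =>
    le_trans (hL₀ x hx) (le_max_left _ _)
  -- uniform continuity of the derivative
  have hunif : ∀ κ : ℝ, 0 < κ → ∃ η, 0 < η ∧ ∀ x ∈ Metric.closedBall c ρ,
      ∀ x' ∈ Metric.closedBall c ρ, dist x x' ≤ η → ‖fderiv ℝ V x - fderiv ℝ V x'‖ ≤ κ := by
    intro κ hκ
    have h1 := hKc.uniformContinuousOn_of_continuous hDfcont
    rw [Metric.uniformContinuousOn_iff] at h1
    obtain ⟨η, hη0, hη⟩ := h1 κ hκ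
    refine ⟨η / 2, by linarith, fun x hx x' hx' hd => ?_⟩
    have := hη x hx x' hx' (lt_of_le_of_lt hd (by linarith))
    rw [dist_eq_norm] at this
    exact le_of_lt this
  -- the basic small time
  set εM := min (min (ε₁ / 2) (ρ / (8 * (C + 1)))) (1 / (2 * L + 1)) with hεM_def
  have hεM0 : 0 < εM := by
    apply lt_min (lt_min (by linarith) (by positivity)) (by positivity)
  have hεMε₁ : εM < ε₁ := lt_of_le_of_lt (le_trans (min_le_left _ _) (min_le_left _ _)) (by linarith)
  have hεMρ : εM ≤ ρ / (8 * (C + 1)) := le_trans (min_le_left _ _) (min_le_right _ _)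
  have hεML : εM ≤ 1 / (2 * L + 1) := min_le_right _ _
  have hCεM : C * εM ≤ ρ / 8 := by
    have h1 : C * εM ≤ C * (ρ / (8 * (C + 1))) := mul_le_mul_of_nonneg_left hεMρ hC0
    have h2 : C * (ρ / (8 * (C + 1))) ≤ ρ / 8 := by
      rw [← mul_div_assoc]
      rw [div_le_div_iff₀ (by positivity) (by norm_num)]
      nlinarith [hρ0.le, hC0]
    linarith
  -- trajectory of c stays near c
  have hodes : ∀ y : Pt n, dist y c < ε₁ → ∀ τ : ℝ, |τ| < ε₁ →
      HasDerivAt (fun σ => φ σ y) (V (φ τ y)) τ := fun y hy τ hτ =>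
    hφ.hasDeriv τ y (hbox τ y hτ hy)
  have hodeneg : ∀ y : Pt n, dist y c < ε₁ → ∀ τ : ℝ, |τ| < ε₁ →
      HasDerivAt (fun σ => φ (-σ) y) (-(V (φ (-τ) y))) τ := by
    intro y hy τ hτ
    have h1 : HasDerivAt (fun σ => φ σ y) (V (φ (-τ) y)) (-τ) :=
      hodes y hy (-τ) (by rwa [abs_neg])
    have h2 : HasDerivAt (fun σ : ℝ => -σ) (-1 : ℝ) τ := (hasDerivAt_id τ).neg
    have h3 := h1.scomp τ h2
    simpa [Function.comp_def] using h3
  have hcc : dist c c < ε₁ := by simpa using hε₁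
  have hstayc : ∀ σ : ℝ, |σ| ≤ εM → dist (φ σ c) c ≤ C * |σ| := by
    intro σ hσ
    rcases le_or_gt 0 σ with hσ0 | hσ0
    · have hσ' : σ ≤ εM := by rwa [abs_of_nonneg hσ0] at hσ
      have h1 := stay (g := fun τ => φ τ c) (gd := fun τ => V (φ τ c)) (z := c)
        (T := σ) (C := C) (ρ := ρ) (δ' := 0) hC0 le_rfl hσ0
        (fun τ hτ => hodes c hcc τ (by
          rw [abs_of_nonneg hτ.1]
          exact lt_of_le_of_lt (le_trans hτ.2 hσ') hεMε₁))
        (by simp [hφ.init])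
        (fun τ hτ hmem => hCb _ hmem)
        (by
          have h2 : C * σ ≤ ρ / 8 :=
            le_trans (mul_le_mul_of_nonneg_left hσ' hC0) hCεM
          linarith)
        σ (right_mem_Icc.mpr hσ0)
      rw [abs_of_nonneg hσ0]
      linarith [h1]
    · have hσ' : -σ ≤ εM := by rwa [abs_of_neg hσ0] at hσ
      have h1 := stay (g := fun τ => φ (-τ) c) (gd := fun τ => -(V (φ (-τ) c))) (z := c)
        (T := -σ) (C := C) (ρ := ρ) (δ' := 0) hC0 le_rfl (by linarith)
        (fun τ hτ => hodeneg c hcc τ (by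
          rw [abs_of_nonneg hτ.1]
          exact lt_of_le_of_lt (le_trans hτ.2 hσ') hεMε₁))
        (by simp [hφ.init])
        (fun τ hτ hmem => by rw [norm_neg]; exact hCb _ hmem)
        (by
          have h2 : C * (-σ) ≤ ρ / 8 :=
            le_trans (mul_le_mul_of_nonneg_left hσ' hC0) hCεM
          linarith)
        (-σ) (right_mem_Icc.mpr (by linarith))
      rw [abs_of_neg hσ0]
      simpa using h1
  have hstayc' : ∀ σ : ℝ, |σ| ≤ εM → φ σ c ∈ Metric.closedBall c (ρ / 8) := by
    intro σ hσ
    rw [Metric.mem_closedBall]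
    refine le_trans (hstayc σ hσ) ?_
    exact le_trans (mul_le_mul_of_nonneg_left hσ hC0) hCεM
  -- group laws
  have hφts : ∀ s : ℝ, |s| < ε₁ → φ (t + s) ξ = φ s c := by
    intro s hs
    have h1 := hφ.group s t ξ htD (hbox s c hs hcc)
    rw [add_comm t s]
    exact h1.2.symm
  have hgrp : ∀ s σ : ℝ, |s| ≤ εM → |σ| < ε₁ → φ σ (φ s c) = φ (σ + s) c := by
    intro s σ hs hσ
    have hsε₁ : |s| < ε₁ := lt_of_le_of_lt hs hεMε₁
    have hd : dist (φ s c) c < ε₁ := by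
      have := hstayc' s hs
      rw [Metric.mem_closedBall] at this
      linarith
    exact (hφ.group σ s c (hbox s c hsε₁ hcc) (hbox σ _ hσ hd)).2
  -- the variational coefficient
  set A : ℝ → (Pt n →L[ℝ] Pt n) := fun σ => fderiv ℝ V (φ σ c) with hA_def
  have hmapsA : ∀ σ ∈ Icc (-εM) εM, φ σ c ∈ Metric.closedBall c ρ := by
    intro σ hσ
    apply Metric.closedBall_subset_closedBall (by linarith) (hstayc' σ (abs_le.mpr ⟨hσ.1, hσ.2⟩))
  have hAcont : ContinuousOn A (Icc (-εM) εM) := by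
    apply hDfcont.comp
    · intro σ hσ
      have : |σ| < ε₁ := lt_of_le_of_lt (abs_le.mpr ⟨hσ.1, hσ.2⟩) hεMε₁
      exact ((hodes c hcc σ this).continuousAt).continuousWithinAt
    · exact hmapsA
  have hAbound : ∀ σ ∈ Icc (-εM) εM, ‖A σ‖ ≤ L := fun σ hσ => hLb _ (hmapsA σ hσ)
  -- Picard-Lindelöf for the forward variational equation
  have hPLM : IsPicardLindelof (fun σ (X : Pt n →L[ℝ] Pt n) => (A σ).comp X)
      (⟨0, ⟨by linarith, by linarith⟩⟩ : Icc (-εM) εM) (1 : Pt n →L[ℝ] Pt n) 1 0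
      (2 * L + 1).toNNReal L.toNNReal := by
    constructor
    · intro σ hσ
      apply LipschitzOnWith.of_dist_le_mul
      intro X hX Y hY
      rw [dist_eq_norm, dist_eq_norm, ← ContinuousLinearMap.comp_sub]
      calc ‖(A σ).comp (X - Y)‖ ≤ ‖A σ‖ * ‖X - Y‖ := ContinuousLinearMap.opNorm_comp_le _ _
        _ ≤ L.toNNReal * ‖X - Y‖ := by
            apply mul_le_mul_of_nonneg_right _ (norm_nonneg _)
            rw [Real.coe_toNNReal L hL0]
            exact hAbound σ hσ
    · intro X hX
      have h1 : Continuous fun (B : Pt n →L[ℝ] Pt n) =>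
          ((ContinuousLinearMap.compL ℝ (Pt n) (Pt n) (Pt n)).flip X) B :=
        ((ContinuousLinearMap.compL ℝ (Pt n) (Pt n) (Pt n)).flip X).continuous
      exact (h1.comp_continuousOn hAcont)
    · intro σ hσ X hX
      rw [Real.coe_toNNReal _ (by positivity)]
      have h1 : ‖X‖ ≤ 2 := by
        have := Metric.mem_closedBall.mp hX
        push_cast at this
        rw [dist_eq_norm] at this
        have h2 : ‖X‖ ≤ ‖X - 1‖ + ‖(1 : Pt n →L[ℝ] Pt n)‖ := by
          calc ‖X‖ = ‖X - 1 + 1‖ := by rw [sub_add_cancel]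
            _ ≤ ‖X - 1‖ + ‖(1 : Pt n →L[ℝ] Pt n)‖ := norm_add_le _ _
        have h3 : ‖(1 : Pt n →L[ℝ] Pt n)‖ ≤ 1 := ContinuousLinearMap.norm_id_le
        linarith
      calc ‖(A σ).comp X‖ ≤ ‖A σ‖ * ‖X‖ := ContinuousLinearMap.opNorm_comp_le _ _
        _ ≤ L * 2 := mul_le_mul (hAbound σ hσ) h1 (norm_nonneg _) hL0
        _ ≤ 2 * L + 1 := by linarith
    · have h1 : max (εM - 0) (0 - -εM) = εM := by
        rw [sub_zero, zero_sub, neg_neg, max_self]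
      have h2 : ((2 * L + 1).toNNReal : ℝ) = 2 * L + 1 := Real.coe_toNNReal _ (by positivity)
      have h3 : (2 * L + 1) * εM ≤ 1 := by
        rw [← le_div_iff₀' (by positivity)]
        exact hεML
      show ((2 * L + 1).toNNReal : ℝ) * max (εM - (0:ℝ)) ((0:ℝ) - -εM) ≤ _
      rw [h1, h2]
      refine le_trans h3 (by norm_num)
  obtain ⟨M, hM0, hMd⟩ := hPLM.exists_eq_forall_mem_Icc_hasDerivWithinAt₀
  replace hM0 : M 0 = 1 := hM0
  have hMdAt : ∀ σ ∈ Ioo (-εM) εM, HasDerivAt M ((A σ).comp (M σ)) σ := fun σ hσ =>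
    (hMd σ (Ioo_subset_Icc_self hσ)).hasDerivAt (Icc_mem_nhds hσ.1 hσ.2)
  -- Picard-Lindelöf for the backward (adjoint) variational equation
  have hPLN : IsPicardLindelof (fun σ (X : Pt n →L[ℝ] Pt n) => -(X.comp (A σ)))
      (⟨0, ⟨by linarith, by linarith⟩⟩ : Icc (-εM) εM) (1 : Pt n →L[ℝ] Pt n) 1 0
      (2 * L + 1).toNNReal L.toNNReal := by
    constructor
    · intro σ hσ
      apply LipschitzOnWith.of_dist_le_mul
      intro X hX Y hY
      rw [dist_eq_norm, dist_eq_norm]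
      have h0 : -(X.comp (A σ)) - -(Y.comp (A σ)) = -((X - Y).comp (A σ)) := by
        rw [ContinuousLinearMap.sub_comp]; abel
      rw [h0, norm_neg]
      calc ‖(X - Y).comp (A σ)‖ ≤ ‖X - Y‖ * ‖A σ‖ := ContinuousLinearMap.opNorm_comp_le _ _
        _ ≤ ‖X - Y‖ * L.toNNReal := by
            apply mul_le_mul_of_nonneg_left _ (norm_nonneg _)
            rw [Real.coe_toNNReal L hL0]
            exact hAbound σ hσ
        _ = L.toNNReal * ‖X - Y‖ := by ring
    · intro X hX
      have h1 : Continuous fun (B : Pt n →L[ℝ] Pt n) =>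
          -(((ContinuousLinearMap.compL ℝ (Pt n) (Pt n) (Pt n)) X) B) :=
        (((ContinuousLinearMap.compL ℝ (Pt n) (Pt n) (Pt n)) X).continuous).neg
      exact (h1.comp_continuousOn hAcont)
    · intro σ hσ X hX
      rw [Real.coe_toNNReal _ (by positivity)]
      have h1 : ‖X‖ ≤ 2 := by
        have := Metric.mem_closedBall.mp hX
        push_cast at this
        rw [dist_eq_norm] at this
        have h2 : ‖X‖ ≤ ‖X - 1‖ + ‖(1 : Pt n →L[ℝ] Pt n)‖ := by
          calc ‖X‖ = ‖X - 1 + 1‖ := by rw [sub_add_cancel]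
            _ ≤ ‖X - 1‖ + ‖(1 : Pt n →L[ℝ] Pt n)‖ := norm_add_le _ _
        have h3 : ‖(1 : Pt n →L[ℝ] Pt n)‖ ≤ 1 := ContinuousLinearMap.norm_id_le
        linarith
      rw [norm_neg]
      calc ‖X.comp (A σ)‖ ≤ ‖X‖ * ‖A σ‖ := ContinuousLinearMap.opNorm_comp_le _ _
        _ ≤ 2 * L := by
            apply mul_le_mul h1 (hAbound σ hσ) (norm_nonneg _) (by norm_num)
        _ ≤ 2 * L + 1 := by linarith
    · have h1 : max (εM - 0) (0 - -εM) = εM := by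
        rw [sub_zero, zero_sub, neg_neg, max_self]
      have h2 : ((2 * L + 1).toNNReal : ℝ) = 2 * L + 1 := Real.coe_toNNReal _ (by positivity)
      have h3 : (2 * L + 1) * εM ≤ 1 := by
        rw [← le_div_iff₀' (by positivity)]
        exact hεML
      show ((2 * L + 1).toNNReal : ℝ) * max (εM - (0:ℝ)) ((0:ℝ) - -εM) ≤ _
      rw [h1, h2]
      refine le_trans h3 (by norm_num)
  obtain ⟨N, hN0, hNd⟩ := hPLN.exists_eq_forall_mem_Icc_hasDerivWithinAt₀
  replace hN0 : N 0 = 1 := hN0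
  have hNdAt : ∀ σ ∈ Ioo (-εM) εM, HasDerivAt N (-((N σ).comp (A σ))) σ := fun σ hσ =>
    (hNd σ (Ioo_subset_Icc_self hσ)).hasDerivAt (Icc_mem_nhds hσ.1 hσ.2)
  -- N is a two-sided inverse of M
  have hNM : ∀ σ : ℝ, |σ| ≤ εM / 2 → (N σ).comp (M σ) = 1 := by
    intro σ hσ
    have hσεM : |σ| < εM := lt_of_le_of_lt hσ (by linarith)
    set F : ℝ → (Pt n →L[ℝ] Pt n) := fun τ => (N τ).comp (M τ) with hF_def
    have hFd : ∀ τ ∈ Ioo (-εM) εM, HasDerivAt F 0 τ := by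
      intro τ hτ
      have h1 := (hNdAt τ hτ).clm_comp (hMdAt τ hτ)
      have h2 : (-((N τ).comp (A τ))).comp (M τ) + (N τ).comp ((A τ).comp (M τ)) = 0 := by
        rw [ContinuousLinearMap.neg_comp, ContinuousLinearMap.comp_assoc]
        exact neg_add_cancel _
      rwa [h2] at h1
    have hF0 : F 0 = 1 := by
      rw [hF_def]
      simp only [hN0, hM0]
      rw [ContinuousLinearMap.one_def, ContinuousLinearMap.id_comp]
    have habs : |σ| < εM := hσεM
    rcases le_or_gt 0 σ with hσ0 | hσ0
    · have hIoo : Icc (0:ℝ) σ ⊆ Ioo (-εM) εM := fun τ hτ =>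
        ⟨by linarith [hτ.1], lt_of_le_of_lt hτ.2 (by rwa [abs_of_nonneg hσ0] at habs)⟩
      have := constant_of_has_deriv_right_zero (f := F) (a := 0) (b := σ)
        (fun τ hτ => ((hFd τ (hIoo hτ)).continuousAt).continuousWithinAt)
        (fun τ hτ => (hFd τ (hIoo (Ico_subset_Icc_self hτ))).hasDerivWithinAt)
        σ (right_mem_Icc.mpr hσ0)
      calc (N σ).comp (M σ) = F σ := rfl
        _ = F 0 := this
        _ = 1 := hF0
    · have habs' : -εM < σ := by
        rw [abs_of_neg hσ0] at habs; linarith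
      have hIoo : Icc σ (0:ℝ) ⊆ Ioo (-εM) εM := fun τ hτ =>
        ⟨lt_of_lt_of_le habs' hτ.1, lt_of_le_of_lt hτ.2 hεM0⟩
      have := constant_of_has_deriv_right_zero (f := F) (a := σ) (b := 0)
        (fun τ hτ => ((hFd τ (hIoo hτ)).continuousAt).continuousWithinAt)
        (fun τ hτ => (hFd τ (hIoo (Ico_subset_Icc_self hτ))).hasDerivWithinAt)
        0 (mem_Icc.mpr ⟨le_of_lt hσ0, le_rfl⟩)
      calc (N σ).comp (M σ) = F σ := rfl
        _ = F 0 := this.symm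
        _ = 1 := hF0
  have hMN : ∀ σ : ℝ, |σ| ≤ εM / 2 → (M σ).comp (N σ) = 1 := by
    intro σ hσ
    have hNM' := hNM σ hσ
    have hNMap : ∀ x, (N σ) ((M σ) x) = x := by
      intro x
      rw [← ContinuousLinearMap.comp_apply, hNM', ContinuousLinearMap.one_apply]
    have hinj : Function.Injective (M σ) := fun x y hxy => by
      have := congrArg (N σ) hxy
      rwa [hNMap, hNMap] at this
    have hsurj : Function.Surjective (M σ) :=
      (LinearMap.injective_iff_surjective (f := ((M σ : Pt n →L[ℝ] Pt n) :
        Pt n →ₗ[ℝ] Pt n))).mp hinj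
    apply ContinuousLinearMap.ext
    intro v
    obtain ⟨u, hu⟩ := hsurj v
    rw [ContinuousLinearMap.comp_apply, ContinuousLinearMap.one_apply, ← hu, hNMap]
  -- identification of the spatial derivative of the flow along the trajectory
  have hfd : ∀ s : ℝ, |s| ≤ εM / 2 → HasFDerivAt (φ (-s)) (N s) (φ s c) := by
    intro s hs
    have hsM : |s| ≤ εM := le_trans hs (by linarith)
    set z := φ s c with hz_def
    have hz : z ∈ Metric.closedBall c (ρ / 8) := hstayc' s hsM
    have hzc : dist z c ≤ ρ / 8 := Metric.mem_closedBall.mp hz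
    have hzρ : Metric.closedBall z (ρ / 2) ⊆ Metric.closedBall c ρ := by
      intro x hx
      rw [Metric.mem_closedBall] at hx ⊢
      calc dist x c ≤ dist x z + dist z c := dist_triangle _ _ _
        _ ≤ ρ / 2 + ρ / 8 := by linarith
        _ ≤ ρ := by linarith
    have hzε₁ : ∀ y ∈ Metric.closedBall z (ρ / 8), dist y c < ε₁ := by
      intro y hy
      rw [Metric.mem_closedBall] at hy
      calc dist y c ≤ dist y z + dist z c := dist_triangle _ _ _
        _ ≤ ρ / 8 + ρ / 8 := by linarith
        _ < ε₁ := by linarith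
    have hsmall' : ρ / 8 + C * εM < ρ / 2 := by linarith [hCεM]
    have hf'z : ∀ x ∈ Metric.closedBall z (ρ / 2), HasFDerivAt V (fderiv ℝ V x) x :=
      fun x hx => hdiff x (hzρ hx)
    have hCz : ∀ x ∈ Metric.closedBall z (ρ / 2), ‖V x‖ ≤ C := fun x hx => hCb x (hzρ hx)
    have hLz : ∀ x ∈ Metric.closedBall z (ρ / 2), ‖fderiv ℝ V x‖ ≤ L :=
      fun x hx => hLb x (hzρ hx)
    have hf'uz : ∀ κ : ℝ, 0 < κ → ∃ η, 0 < η ∧ ∀ x ∈ Metric.closedBall z (ρ / 2),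
        ∀ x' ∈ Metric.closedBall z (ρ / 2), dist x x' ≤ η → ‖fderiv ℝ V x - fderiv ℝ V x'‖ ≤ κ := by
      intro κ hκ
      obtain ⟨η, hη0, hη⟩ := hunif κ hκ
      exact ⟨η, hη0, fun x hx x' hx' hd => hη x (hzρ hx) x' (hzρ hx') hd⟩
    rcases le_or_gt 0 s with hs0 | hs0
    · -- s ≥ 0 : backward flow
      have hconc := master (f := fun x => -V x) (f' := fun x => -(fderiv ℝ V x))
        (X := fun σ y => φ (-σ) y) (z := z) (ρ := ρ / 2) (δ := ρ / 8) (ε := εM)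
        (C := C) (L := L) (by linarith) hεM0 hC0 hL0
        (fun y => by show φ (-(0:ℝ)) y = y; rw [neg_zero]; exact hφ.init y)
        (fun y hy σ hσ => hodeneg y (hzε₁ y hy) σ
          (lt_of_le_of_lt (abs_le.mpr ⟨hσ.1, hσ.2⟩) hεMε₁))
        (fun x hx => (hf'z x hx).neg)
        (fun x hx => by rw [norm_neg]; exact hCz x hx)
        (fun x hx => by rw [norm_neg]; exact hLz x hx)
        (by
          intro κ hκ
          obtain ⟨η, hη0, hη⟩ := hf'uz κ hκ
          refine ⟨η, hη0, fun x hx x' hx' hd => ?_⟩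
          rw [neg_sub_neg, ← norm_neg, neg_sub]
          exact hη x hx x' hx' hd)
        hsmall'
        (r := s) ⟨hs0, by rw [abs_of_nonneg hs0] at hs; linarith⟩
        (P := fun σ => (M (s - σ)).comp (N s))
        (by show (M (s - 0)).comp (N s) = 1; rw [sub_zero]; exact hMN s hs)
        (by
          intro σ hσ
          have hs2 : s ≤ εM / 2 := by
            have := abs_of_nonneg hs0 ▸ hs
            linarith [this]
          have hintM : s - σ ∈ Ioo (-εM) εM :=
            ⟨by linarith [hσ.1, hσ.2, hεM0], by linarith [hσ.1, hσ.2]⟩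
          have h1 := hMdAt (s - σ) hintM
          have hlin : HasDerivAt (fun τ : ℝ => s - τ) (-1 : ℝ) σ :=
            (hasDerivAt_id σ).const_sub s
          have h2 := h1.scomp σ hlin
          have h3 := h2.clm_comp (hasDerivAt_const σ (N s))
          have hXz : φ (-σ) z = φ (s - σ) c := by
            rw [hz_def]
            rw [hgrp s (-σ) hsM (by
              rw [abs_neg, abs_of_nonneg hσ.1]
              calc σ ≤ s := hσ.2
                _ ≤ εM / 2 := hs2
                _ < ε₁ := by linarith)]
            ring_nf
          show HasDerivAt (fun σ => (M (s - σ)).comp (N s))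
            ((-(fderiv ℝ V (φ (-σ) z))).comp ((M (s - σ)).comp (N s))) σ
          rw [hXz]
          convert h3 using 1
          · rfl
          · refine ContinuousLinearMap.ext fun v => ?_
            simp [hA_def])
      have hconc' : HasFDerivAt (φ (-s)) ((M (s - s)).comp (N s)) (φ s c) := hconc
      have hPs : (M (s - s)).comp (N s) = N s := by
        rw [sub_self, hM0, ContinuousLinearMap.one_def, ContinuousLinearMap.id_comp]
      rw [hPs] at hconc'
      exact hconc'
    · -- s < 0 : forward flow
      have hs2 : -s ≤ εM / 2 := by rwa [abs_of_neg hs0] at hs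
      have hconc := master (f := V) (f' := fun x => fderiv ℝ V x)
        (X := fun σ y => φ σ y) (z := z) (ρ := ρ / 2) (δ := ρ / 8) (ε := εM)
        (C := C) (L := L) (by linarith) hεM0 hC0 hL0
        (fun y => hφ.init y)
        (fun y hy σ hσ => hodes y (hzε₁ y hy) σ
          (lt_of_le_of_lt (abs_le.mpr ⟨hσ.1, hσ.2⟩) hεMε₁))
        hf'z hCz hLz hf'uz hsmall'
        (r := -s) ⟨by linarith, by linarith⟩
        (P := fun σ => (M (s + σ)).comp (N s))
        (by show (M (s + 0)).comp (N s) = 1; rw [add_zero]; exact hMN s hs)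
        (by
          intro σ hσ
          have hintM : s + σ ∈ Ioo (-εM) εM :=
            ⟨by linarith [hσ.1, hσ.2, hεM0], by linarith [hσ.1, hσ.2, hεM0]⟩
          have h1 := hMdAt (s + σ) hintM
          have hlin : HasDerivAt (fun τ : ℝ => s + τ) (1 : ℝ) σ := by
            simpa using (hasDerivAt_id σ).const_add s
          have h2 := h1.scomp σ hlin
          have h3 := h2.clm_comp (hasDerivAt_const σ (N s))
          have hXz : φ σ z = φ (s + σ) c := by
            rw [hz_def]
            rw [hgrp s σ hsM (by
              rw [abs_of_nonneg hσ.1]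
              calc σ ≤ -s := hσ.2
                _ ≤ εM / 2 := hs2
                _ < ε₁ := by linarith)]
            ring_nf
          show HasDerivAt (fun σ => (M (s + σ)).comp (N s))
            ((fderiv ℝ V (φ σ z)).comp ((M (s + σ)).comp (N s))) σ
          rw [hXz]
          convert h3 using 1
          · rfl
          · refine ContinuousLinearMap.ext fun v => ?_
            simp [hA_def])
      have hconc' : HasFDerivAt (φ (-s)) ((M (s + -s)).comp (N s)) (φ s c) := hconc
      have hPs : (M (s + -s)).comp (N s) = N s := by
        rw [add_neg_cancel, hM0, ContinuousLinearMap.one_def, ContinuousLinearMap.id_comp]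
      rw [hPs] at hconc'
      exact hconc'
  -- final assembly
  have hev : (fun s => fderiv ℝ (φ (-s)) (φ (t + s) ξ) (W (t + s))) =ᶠ[nhds (0:ℝ)]
      (fun s => N s (W (t + s))) := by
    filter_upwards [Ioo_mem_nhds (by linarith : -(εM/2) < (0:ℝ)) (by linarith : (0:ℝ) < εM/2)]
      with s hs
    have hs' : |s| ≤ εM / 2 := le_of_lt (abs_lt.mpr ⟨by linarith [hs.1], hs.2⟩)
    have hsε₁ : |s| < ε₁ := lt_of_le_of_lt hs' (by linarith)
    rw [hφts s hsε₁]
    rw [(hfd s hs').fderiv]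
  have hNd0 : HasDerivAt N (-((N 0).comp (A 0))) 0 := hNdAt 0 ⟨by linarith, hεM0⟩
  have hWt : HasDerivAt (fun s => W (t + s)) (deriv W t) 0 := by
    have h1 : HasDerivAt W (deriv W t) (t + 0) := by
      rw [add_zero]; exact (hW t).hasDerivAt
    have h2 : HasDerivAt (fun s : ℝ => t + s) 1 0 := by
      simpa using (hasDerivAt_id (0:ℝ)).const_add t
    have h3 := h1.scomp 0 h2
    simpa [Function.comp_def] using h3
  have hF := hNd0.clm_apply hWt
  have hval : (-((N 0).comp (A 0))) (W (t + 0)) + (N 0) (deriv W t)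
      = deriv W t - (fderiv ℝ V (φ t ξ)) (W t) := by
    rw [hN0, add_zero, hA_def]
    simp only [hφ.init]
    rw [ContinuousLinearMap.one_def, ContinuousLinearMap.id_comp]
    simp only [ContinuousLinearMap.neg_apply, ContinuousLinearMap.id_apply]
    rw [← hc_def]
    abel
  rw [hval] at hF
  exact hF.congr_of_eventuallyEq hev


lemma fderiv_expand {n : ℕ} {f : Vec n → ℝ} {x : Vec n} (hf : DifferentiableAt ℝ f x)
    (v : Vec n) : fderiv ℝ f x v = ∑ l, v l * pd l f x := by
  have h1 : v = ∑ l, v l • (Pi.single l 1 : Vec n) := by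
    ext j
    rw [Finset.sum_apply]
    simp [Pi.single_apply]
  calc fderiv ℝ f x v = fderiv ℝ f x (∑ l, v l • (Pi.single l 1 : Vec n)) := by rw [← h1]
    _ = ∑ l, v l * pd l f x := by
        rw [map_sum]
        exact Finset.sum_congr rfl fun l _ => by rw [map_smul, smul_eq_mul]; rfl

lemma sharp_fderiv_apply {n : ℕ} {U : Set (Vec n)} (hU : IsOpen U)
    {Pb : Vec n → Fin n → Fin n → ℝ}
    (hPb : ∀ p q, ContDiffOn ℝ (⊤ : ℕ∞) (fun x => Pb x p q) U)
    {V : Pt n → Pt n} (hVs : ContDiffOn ℝ (⊤ : ℕ∞) V (U ×ˢ (univ : Set (Vec n))))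
    (hbase : ∀ ξ : Pt n, ξ.1 ∈ U → (V ξ).1 = sharp Pb ξ.1 ξ.2)
    {c : Pt n} (hc : c.1 ∈ U) (w : Pt n) (r : Fin n) :
    (fderiv ℝ V c w).1 r =
      (∑ p, (∑ l, w.1 l * pd l (fun y => Pb y p r) c.1) * c.2 p)
      + ∑ p, Pb c.1 p r * w.2 p := by
  have hO : IsOpen (U ×ˢ (univ : Set (Vec n))) := hU.prod isOpen_univ
  have hcO : c ∈ U ×ˢ (univ : Set (Vec n)) := ⟨hc, mem_univ _⟩
  have hVd : DifferentiableAt ℝ V c :=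
    (hVs.contDiffAt (hO.mem_nhds hcO)).differentiableAt (by simp)
  have hPbdiff : ∀ p, DifferentiableAt ℝ (fun y => Pb y p r) c.1 := fun p =>
    ((hPb p r).contDiffAt (hU.mem_nhds hc)).differentiableAt (by simp)
  set L : Pt n →L[ℝ] ℝ :=
    (ContinuousLinearMap.proj r).comp (ContinuousLinearMap.fst ℝ (Vec n) (Vec n)) with hL_def
  have h2 : HasFDerivAt (fun η => L (V η)) (L.comp (fderiv ℝ V c)) c :=
    L.hasFDerivAt.comp c hVd.hasFDerivAt
  have h3 : fderiv ℝ (fun η => (V η).1 r) c = L.comp (fderiv ℝ V c) :=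
    HasFDerivAt.fderiv (by exact h2)
  have h1 : (fderiv ℝ V c w).1 r = fderiv ℝ (fun η => (V η).1 r) c w := by
    rw [h3]; rfl
  set G : Pt n → ℝ := fun η => ∑ p, Pb η.1 p r * η.2 p with hG_def
  have hev : (fun η => (V η).1 r) =ᶠ[nhds c] G := by
    filter_upwards [hO.mem_nhds hcO] with η hη
    rw [hbase η hη.1]
    rfl
  have h4 : fderiv ℝ (fun η => (V η).1 r) c = fderiv ℝ G c := hev.fderiv_eq
  have hG : HasFDerivAt G (∑ p,
      (Pb c.1 p r • ((ContinuousLinearMap.proj p).comp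
        (ContinuousLinearMap.snd ℝ (Vec n) (Vec n)))
       + c.2 p • ((fderiv ℝ (fun y => Pb y p r) c.1).comp
        (ContinuousLinearMap.fst ℝ (Vec n) (Vec n))))) c := by
    apply HasFDerivAt.fun_sum
    intro p _
    have hfst : HasFDerivAt (fun η : Pt n => Pb η.1 p r)
        ((fderiv ℝ (fun y => Pb y p r) c.1).comp (ContinuousLinearMap.fst ℝ (Vec n) (Vec n))) c :=
      (hPbdiff p).hasFDerivAt.comp c hasFDerivAt_fst
    have hsnd : HasFDerivAt (fun η : Pt n => η.2 p)
        ((ContinuousLinearMap.proj p).comp (ContinuousLinearMap.snd ℝ (Vec n) (Vec n))) c :=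
      ((ContinuousLinearMap.proj p).comp (ContinuousLinearMap.snd ℝ (Vec n) (Vec n))).hasFDerivAt
    exact hfst.mul hsnd
  have h5 : fderiv ℝ G c = _ := hG.fderiv
  rw [h1, h4, h5]
  rw [ContinuousLinearMap.sum_apply]
  have h6 : ∀ p, ((Pb c.1 p r • ((ContinuousLinearMap.proj p).comp
        (ContinuousLinearMap.snd ℝ (Vec n) (Vec n)))
       + c.2 p • ((fderiv ℝ (fun y => Pb y p r) c.1).comp
        (ContinuousLinearMap.fst ℝ (Vec n) (Vec n))))) w
      = Pb c.1 p r * w.2 p + (∑ l, w.1 l * pd l (fun y => Pb y p r) c.1) * c.2 p := by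
    intro p
    rw [ContinuousLinearMap.add_apply, ContinuousLinearMap.smul_apply,
      ContinuousLinearMap.smul_apply, ContinuousLinearMap.comp_apply,
      ContinuousLinearMap.comp_apply]
    rw [fderiv_expand (hPbdiff p) _]
    simp [smul_eq_mul]
    ring
  rw [Finset.sum_congr rfl fun p _ => h6 p]
  rw [Finset.sum_add_distrib]
  ring

lemma sum_identity {n : ℕ} (P : Fin n → ℝ) (Gm : Fin n → Fin n → Fin n → ℝ)
    (pdv : Fin n → Fin n → ℝ) (w1 w2 a2 : Fin n → ℝ) :
    -((∑ p, (∑ l, w1 l * pdv l p) * a2 p) + ∑ p, P p * w2 p)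
    = -(∑ p, P p * (w2 p - ∑ p', ∑ r', Gm p' p r' * w1 p' * a2 r'))
      + ∑ p, ∑ q, a2 p * w1 q * (-(∑ s', P s' * Gm q s' p) - pdv q p) := by
  have swap3 : ∀ f : Fin n → Fin n → Fin n → ℝ,
      (∑ p, ∑ q, ∑ s, f p q s) = ∑ s, ∑ q, ∑ p, f p q s := by
    intro f
    calc (∑ p, ∑ q, ∑ s, f p q s) = ∑ q, ∑ p, ∑ s, f p q s := Finset.sum_comm
      _ = ∑ q, ∑ s, ∑ p, f p q s := Finset.sum_congr rfl (fun q _ => Finset.sum_comm)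
      _ = ∑ s, ∑ q, ∑ p, f p q s := Finset.sum_comm
  have hA : (∑ p, (∑ l, w1 l * pdv l p) * a2 p) = ∑ p, ∑ q, a2 p * w1 q * pdv q p := by
    refine Finset.sum_congr rfl fun p _ => ?_
    rw [Finset.sum_mul]
    exact Finset.sum_congr rfl fun q _ => by ring
  have hsplit : (∑ p, P p * (w2 p - ∑ p', ∑ r', Gm p' p r' * w1 p' * a2 r'))
      = (∑ p, P p * w2 p) - ∑ p, P p * ∑ p', ∑ r', Gm p' p r' * w1 p' * a2 r' := by
    rw [← Finset.sum_sub_distrib]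
    exact Finset.sum_congr rfl fun p _ => by ring
  have hsplit2 : (∑ p, ∑ q, a2 p * w1 q * (-(∑ s', P s' * Gm q s' p) - pdv q p))
      = -(∑ p, ∑ q, a2 p * w1 q * ∑ s', P s' * Gm q s' p)
        - ∑ p, ∑ q, a2 p * w1 q * pdv q p := by
    have hinner : ∀ p, (∑ q, a2 p * w1 q * (-(∑ s', P s' * Gm q s' p) - pdv q p))
        = -(∑ q, a2 p * w1 q * ∑ s', P s' * Gm q s' p) - ∑ q, a2 p * w1 q * pdv q p := by
      intro p
      rw [← Finset.sum_neg_distrib, ← Finset.sum_sub_distrib]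
      exact Finset.sum_congr rfl fun q _ => by ring
    rw [Finset.sum_congr rfl fun p _ => hinner p]
    rw [Finset.sum_sub_distrib, Finset.sum_neg_distrib]
  have e1 : (∑ p, P p * ∑ p', ∑ r', Gm p' p r' * w1 p' * a2 r')
      = ∑ p, ∑ q, a2 p * w1 q * ∑ s', P s' * Gm q s' p := by
    have lhs1 : (∑ p, P p * ∑ p', ∑ r', Gm p' p r' * w1 p' * a2 r')
        = ∑ p, ∑ p', ∑ r', P p * (Gm p' p r' * w1 p' * a2 r') := by
      refine Finset.sum_congr rfl fun p _ => ?_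
      rw [Finset.mul_sum]
      exact Finset.sum_congr rfl fun p' _ => by rw [Finset.mul_sum]
    have rhs1 : (∑ p, ∑ q, a2 p * w1 q * ∑ s', P s' * Gm q s' p)
        = ∑ p, ∑ q, ∑ s', a2 p * w1 q * (P s' * Gm q s' p) := by
      refine Finset.sum_congr rfl fun p _ => Finset.sum_congr rfl fun q _ => ?_
      rw [Finset.mul_sum]
    rw [lhs1, rhs1, swap3 (fun p q s' => a2 p * w1 q * (P s' * Gm q s' p))]
    refine Finset.sum_congr rfl fun x _ => Finset.sum_congr rfl fun y _ =>
      Finset.sum_congr rfl fun z _ => by ring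
  rw [hA, hsplit, hsplit2, e1]
  ring


/-- Along `a(t) = φ_t(ξ)`: for a horizontal tangent vector field `W` along `a`
(with respect to the torsion-free classical connection `Γ`),
`dp(L_{V_π}(W)) = ∇̄_a(W̄)`, where `W̄ = (dp)(W)` and `∇̄` is the contravariant
connection on `TM` induced by `Γ`.  Consequently, for an arbitrary tangent
vector field `W` along `a` with components `(W̄, θ_W)`,
`dp(L_{V_π}(W)) = −π♯(θ_W) + ∇̄_a(W̄)`. -/
theorem lie_derivative_projection_formula
    {n : ℕ} (U : Set (Vec n)) (hU : IsOpen U)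
    (Pb : Vec n → Fin n → Fin n → ℝ) (hPb : IsPoissonOn U Pb)
    (V : Pt n → Pt n) (hV : IsSpray U Pb V)
    (D : Set (ℝ × Pt n)) (φ : ℝ → Pt n → Pt n) (hφ : IsLocalFlow U V D φ)
    (Γ : Vec n → Fin n → Fin n → Fin n → ℝ)
    (hΓsym : ∀ x p q r, Γ x q p r = Γ x p q r)  -- torsion-free
    (hΓ : ∀ p q r, ContDiffOn ℝ (⊤ : ℕ∞) (fun x => Γ x p q r) U)
    (ξ : Pt n) (hξ : ∀ t ∈ Icc (0:ℝ) 1, (t, ξ) ∈ D)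
    (W : ℝ → Pt n) (hW : Differentiable ℝ W) :
    (∀ t ∈ Icc (0:ℝ) 1, (∀ s : ℝ, W s ∈ Hor Γ (φ s ξ)) →
      deriv (fun s => (fderiv ℝ (φ (-s)) (φ (t + s) ξ) (W (t + s))).1) 0
        = covAlong (GbarTM Pb Γ) (fun s => (φ s ξ).2) (fun s => (φ s ξ).1)
            (fun s => (W s).1) t) ∧
    (∀ t ∈ Icc (0:ℝ) 1,
      deriv (fun s => (fderiv ℝ (φ (-s)) (φ (t + s) ξ) (W (t + s))).1) 0
        = -sharp Pb ((φ t ξ).1) (vert Γ (φ t ξ) (W t))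
          + covAlong (GbarTM Pb Γ) (fun s => (φ s ξ).2) (fun s => (φ s ξ).1)
              (fun s => (W s).1) t) := by

  have main : ∀ t ∈ Icc (0:ℝ) 1,
      deriv (fun s => (fderiv ℝ (φ (-s)) (φ (t + s) ξ) (W (t + s))).1) 0
        = -sharp Pb ((φ t ξ).1) (vert Γ (φ t ξ) (W t))
          + covAlong (GbarTM Pb Γ) (fun s => (φ s ξ).2) (fun s => (φ s ξ).1)
              (fun s => (W s).1) t := by
    intro t ht
    have hkey := key_hasDerivAt U hU V hV.smooth D φ hφ ξ t (hξ t ht) W hW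
    have hfst : HasDerivAt (fun s => (fderiv ℝ (φ (-s)) (φ (t + s) ξ) (W (t + s))).1)
        ((ContinuousLinearMap.fst ℝ (Vec n) (Vec n))
          (deriv W t - (fderiv ℝ V (φ t ξ)) (W t))) 0 :=
      (ContinuousLinearMap.fst ℝ (Vec n) (Vec n)).hasFDerivAt.comp_hasDerivAt 0 hkey
    rw [hfst.deriv]
    funext r
    have hWr : deriv (fun s => (W s).1 r) t = (deriv W t).1 r := by
      have h1 : HasDerivAt (fun s => (W s).1 r)
          (((ContinuousLinearMap.proj r).comp (ContinuousLinearMap.fst ℝ (Vec n) (Vec n)))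
            (deriv W t)) t :=
        ((ContinuousLinearMap.proj r).comp
          (ContinuousLinearMap.fst ℝ (Vec n) (Vec n))).hasFDerivAt.comp_hasDerivAt t
          (hW t).hasDerivAt
      exact h1.deriv
    have hDV := sharp_fderiv_apply hU (hPb.1.1) hV.smooth hV.base
      (hφ.invariant t ξ (hξ t ht)) (W t) r
    have hLHS : ((ContinuousLinearMap.fst ℝ (Vec n) (Vec n))
          (deriv W t - (fderiv ℝ V (φ t ξ)) (W t))) r
        = (deriv W t).1 r - ((fderiv ℝ V (φ t ξ)) (W t)).1 r := by
      rw [ContinuousLinearMap.coe_fst', Prod.fst_sub, Pi.sub_apply]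
    show ((ContinuousLinearMap.fst ℝ (Vec n) (Vec n))
        (deriv W t - (fderiv ℝ V (φ t ξ)) (W t))) r
      = (-sharp Pb ((φ t ξ).1) (vert Γ (φ t ξ) (W t))
        + covAlong (GbarTM Pb Γ) (fun s => (φ s ξ).2) (fun s => (φ s ξ).1)
            (fun s => (W s).1) t) r
    rw [hLHS, hDV, ← hWr, Pi.add_apply, Pi.neg_apply]
    simp only [covAlong, sharp, vert, GbarTM]
    have halg := sum_identity (fun p => Pb (φ t ξ).1 p r)
      (fun p q r' => Γ (φ t ξ).1 p q r')
      (fun l p => pd l (fun y => Pb y p r) (φ t ξ).1)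
      ((W t).1) ((W t).2) ((φ t ξ).2)
    have hfinal : deriv (fun s => (W s).1 r) t
        - ((∑ p, (∑ l, (W t).1 l * pd l (fun y => Pb y p r) (φ t ξ).1) * (φ t ξ).2 p)
          + ∑ p, Pb (φ t ξ).1 p r * (W t).2 p)
      = -(∑ p, Pb (φ t ξ).1 p r * ((W t).2 p
            - ∑ p', ∑ r', Γ (φ t ξ).1 p' p r' * (W t).1 p' * (φ t ξ).2 r'))
        + (deriv (fun s => (W s).1 r) t
          + ∑ p, ∑ q, (φ t ξ).2 p * (W t).1 q
            * (-(∑ s', Pb (φ t ξ).1 s' r * Γ (φ t ξ).1 q s' p)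
              - pd q (fun y => Pb y p r) (φ t ξ).1)) := by
      have h7 := halg
      linarith [h7]
    exact hfinal
  constructor
  · intro t ht hHor
    rw [main t ht]
    have hvert : vert Γ (φ t ξ) (W t) = fun _ => 0 := by
      funext q
      have := hHor t q
      rw [vert, this]
      ring
    rw [hvert]
    have hsharp0 : sharp Pb ((φ t ξ).1) (fun _ => 0) = fun _ => 0 := by
      funext q
      rw [sharp]
      simp
    rw [hsharp0]
    funext q
    simp
  · intro t ht
    exact main t ht
end PoissonPaper
end
end

section
/- Let (M, π) be a Poisson manifold, V_π a Poisson spray with flow φ_t, ∇ a torsion-free classical connection on TM, ξ ∈ T*M with φ_t(ξ) defined for t ∈ [0,1], a(t) = φ_t(ξ), γ = p ∘ a. For v₀ ∈ T_ξ(T*M), let v_t = (dφ_t)(v₀) with components (v̄_t, θ_{v_t}) with respect to ∇. Then the path v̄ in TM and the path θ_v in T*M along γ satisfy ∇̄_a(v̄) = π♯(θ_v), where ∇̄ is the contravariant connection on TM induced by ∇. -/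
/-!
Formalization framework for "On the existence of symplectic realizations"
(Crainic–Mărcuț).  We work on a chart: the Poisson manifold is an open set
`U ⊆ ℝⁿ` (with `Vec n := Fin n → ℝ`), its cotangent bundle is
`T*U = U × ℝⁿ ⊆ Pt n := Vec n × Vec n`, with bundle projection `Prod.fst`.
A bivector field is given by its components `Pb x p q = π_{pq}(x)`, a classical
connection on `TM` by its Christoffel symbols `Γ x p q r = Γ_{pq}^r(x)`.
-/

noncomputable section
open Set

namespace PoissonPaper

variable {n : ℕ}

section ODETheory
set_option linter.unusedSectionVars false
open Metric MeasureTheory intervalIntegral Filter Topology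


variable {E : Type*} [NormedAddCommGroup E] [NormedSpace ℝ E]

/-- Picard iterates for the linear (variational) ODE `R' = A t ∘ R`, `R 0 = 1`. -/
noncomputable def picIter (A : ℝ → E →L[ℝ] E) : ℕ → ℝ → (E →L[ℝ] E)
  | 0 => fun _ => 1
  | (k+1) => fun t => ∫ s in (0:ℝ)..t, (A s).comp (picIter A k s)

/-- Solution of the linear ODE `R' = A t ∘ R`, `R 0 = 1`, as a series. -/
noncomputable def Rser (A : ℝ → E →L[ℝ] E) (t : ℝ) : E →L[ℝ] E := ∑' k, picIter A k t

lemma abs_integral_abs_pow (k : ℕ) (t : ℝ) :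
    |∫ s in (0:ℝ)..t, |s| ^ k| = |t| ^ (k+1) / (k+1) := by
  rcases le_or_gt 0 t with h | h
  · rw [intervalIntegral.integral_congr (g := fun s => s ^ k)
      (fun s hs => by
        rw [uIcc_of_le h] at hs
        simp [abs_of_nonneg hs.1]),
      integral_pow]
    rw [zero_pow (Nat.succ_ne_zero k), sub_zero, abs_of_nonneg h, abs_div,
      abs_of_nonneg (pow_nonneg h _), abs_of_nonneg (by positivity)]
  · rw [intervalIntegral.integral_congr (g := fun s => (-s) ^ k)
      (fun s hs => by
        rw [uIcc_of_ge h.le] at hs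
        simp [abs_of_nonpos hs.2]),
      show (fun s : ℝ => (-s)^k) = (fun s : ℝ => (fun u : ℝ => u ^ k) (-s)) from rfl,
      intervalIntegral.integral_comp_neg (fun u : ℝ => u ^ k), neg_zero, integral_pow]
    rw [zero_pow (Nat.succ_ne_zero k), zero_sub, abs_of_nonpos h.le, abs_div, abs_neg,
      abs_of_nonneg (pow_nonneg (by linarith : (0:ℝ) ≤ -t) _),
      abs_of_nonneg (by positivity)]

section Series

variable [CompleteSpace E] {A : ℝ → E →L[ℝ] E} {a b L : ℝ}

lemma uIcc_zero_subset {t : ℝ} (ha : a ≤ 0) (hb : 0 ≤ b) (ht : t ∈ Icc a b) :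
    uIcc (0:ℝ) t ⊆ Icc a b := by
  rw [← uIcc_of_le (ha.trans hb)]
  exact uIcc_subset_uIcc (by rw [uIcc_of_le (ha.trans hb)]; exact ⟨ha, hb⟩)
    (by rwa [uIcc_of_le (ha.trans hb)])

lemma picIter_cont_bound (ha : a ≤ 0) (hb : 0 ≤ b) (hA : ContinuousOn A (Icc a b))
    (hL : ∀ t ∈ Icc a b, ‖A t‖ ≤ L) (hL0 : 0 ≤ L) :
    ∀ k, ContinuousOn (picIter A k) (Icc a b) ∧
      ∀ t ∈ Icc a b, ‖picIter A k t‖ ≤ L ^ k * |t| ^ k / k.factorial := by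
  intro k
  induction k with
  | zero =>
    refine ⟨continuousOn_const, fun t _ => ?_⟩
    simp only [pow_zero, Nat.factorial_zero, Nat.cast_one, mul_one, div_one]
    exact ContinuousLinearMap.norm_id_le
  | succ k ih =>
    obtain ⟨hc, hbd⟩ := ih
    have hg : ContinuousOn (fun s => (A s).comp (picIter A k s)) (Icc a b) := hA.clm_comp hc
    have hint : ∀ t ∈ Icc a b,
        IntervalIntegrable (fun s => (A s).comp (picIter A k s)) volume 0 t :=
      fun t ht => (hg.mono (uIcc_zero_subset ha hb ht)).intervalIntegrable
    constructor
    · have h0 : (0:ℝ) ∈ Icc a b := ⟨ha, hb⟩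
      have key : ∀ t ∈ Icc a b, picIter A (k+1) t =
          (∫ s in a..t, (A s).comp (picIter A k s)) -
          (∫ s in a..(0:ℝ), (A s).comp (picIter A k s)) := by
        intro t ht
        rw [intervalIntegral.integral_interval_sub_left]
        · rfl
        · exact (hg.mono (by rw [uIcc_of_le ht.1]; exact Icc_subset_Icc le_rfl ht.2)).intervalIntegrable
        · exact (hg.mono (by rw [uIcc_of_le ha]; exact Icc_subset_Icc le_rfl hb)).intervalIntegrable
      have hio : IntegrableOn (fun s => (A s).comp (picIter A k s)) (uIcc a b) volume := by
        rw [uIcc_of_le (ha.trans hb)]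
        exact hg.integrableOn_Icc
      have hcont : ContinuousOn (fun t => (∫ s in a..t, (A s).comp (picIter A k s)) -
          (∫ s in a..(0:ℝ), (A s).comp (picIter A k s))) (Icc a b) := by
        rw [← uIcc_of_le (ha.trans hb)]
        exact (intervalIntegral.continuousOn_primitive_interval hio).sub continuousOn_const
      exact ContinuousOn.congr hcont key
    · intro t ht
      have key : ‖picIter A (k+1) t‖ ≤
          |∫ s in (0:ℝ)..t, L ^ (k+1) * |s| ^ k / k.factorial| := by
        refine intervalIntegral.norm_integral_le_abs_of_norm_le ?_ ?_
        · refine (MeasureTheory.ae_restrict_iff' measurableSet_uIoc).mpr (.of_forall ?_)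
          intro s hs
          have hs' : s ∈ Icc a b := uIcc_zero_subset ha hb ht (uIoc_subset_uIcc hs)
          calc ‖(A s).comp (picIter A k s)‖ ≤ ‖A s‖ * ‖picIter A k s‖ :=
                ContinuousLinearMap.opNorm_comp_le _ _
          _ ≤ L * (L ^ k * |s| ^ k / k.factorial) :=
                mul_le_mul (hL s hs') (hbd s hs') (norm_nonneg _) hL0
          _ = L ^ (k+1) * |s| ^ k / k.factorial := by ring
        · exact (Continuous.continuousOn (by continuity)).intervalIntegrable
      have : (∫ s in (0:ℝ)..t, L ^ (k+1) * |s| ^ k / k.factorial)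
          = (L ^ (k+1) / k.factorial) * ∫ s in (0:ℝ)..t, |s| ^ k := by
        rw [← intervalIntegral.integral_const_mul]
        congr 1; funext s; ring
      rw [this, abs_mul, abs_of_nonneg (by positivity : (0:ℝ) ≤ L ^ (k+1) / k.factorial),
        abs_integral_abs_pow] at key
      refine key.trans (le_of_eq ?_)
      have hk : (k.factorial:ℝ) ≠ 0 := by
        exact_mod_cast k.factorial_pos.ne'
      rw [Nat.factorial_succ]
      push_cast
      rw [div_mul_div_comm]
      ring


lemma abs_le_max' (ha : a ≤ 0) (hb : 0 ≤ b) {t : ℝ} (ht : t ∈ Icc a b) : |t| ≤ max b (-a) := by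
  have h1 : t ≤ max b (-a) := ht.2.trans (le_max_left _ _)
  have h2 : -t ≤ max b (-a) := (neg_le_neg ht.1).trans (le_max_right _ _)
  exact abs_le.mpr ⟨neg_le.mp h2, h1⟩

lemma picIter_norm_le (ha : a ≤ 0) (hb : 0 ≤ b) (hA : ContinuousOn A (Icc a b))
    (hL : ∀ t ∈ Icc a b, ‖A t‖ ≤ L) (hL0 : 0 ≤ L) (k : ℕ) {t : ℝ} (ht : t ∈ Icc a b) :
    ‖picIter A k t‖ ≤ (L * max b (-a)) ^ k / k.factorial := by
  refine ((picIter_cont_bound ha hb hA hL hL0 k).2 t ht).trans ?_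
  have hfac : (0:ℝ) < k.factorial := by exact_mod_cast k.factorial_pos
  rw [div_le_div_iff_of_pos_right hfac, ← mul_pow]
  exact pow_le_pow_left₀ (by positivity) (mul_le_mul_of_nonneg_left (abs_le_max' ha hb ht) hL0) _

lemma summable_picIter (ha : a ≤ 0) (hb : 0 ≤ b) (hA : ContinuousOn A (Icc a b))
    (hL : ∀ t ∈ Icc a b, ‖A t‖ ≤ L) (hL0 : 0 ≤ L) {t : ℝ} (ht : t ∈ Icc a b) :
    Summable (fun k => picIter A k t) :=
  Summable.of_norm_bounded (Real.summable_pow_div_factorial (L * max b (-a)))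
    (fun k => picIter_norm_le ha hb hA hL hL0 k ht)

lemma Rser_continuousOn (ha : a ≤ 0) (hb : 0 ≤ b) (hA : ContinuousOn A (Icc a b))
    (hL : ∀ t ∈ Icc a b, ‖A t‖ ≤ L) (hL0 : 0 ≤ L) :
    ContinuousOn (Rser A) (Icc a b) :=
  continuousOn_tsum (fun k => (picIter_cont_bound ha hb hA hL hL0 k).1)
    (Real.summable_pow_div_factorial (L * max b (-a)))
    (fun k t ht => picIter_norm_le ha hb hA hL hL0 k ht)

lemma Rser_zero (A : ℝ → E →L[ℝ] E) : Rser A 0 = 1 := by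
  rw [Rser, tsum_eq_single 0]
  · rfl
  · intro k hk
    obtain ⟨m, rfl⟩ := Nat.exists_eq_succ_of_ne_zero hk
    show picIter A (m+1) 0 = 0
    simp [picIter]

lemma Rser_sub_partial (ha : a ≤ 0) (hb : 0 ≤ b) (hA : ContinuousOn A (Icc a b))
    (hL : ∀ t ∈ Icc a b, ‖A t‖ ≤ L) (hL0 : 0 ≤ L) {t : ℝ} (ht : t ∈ Icc a b) (m : ℕ) :
    ‖Rser A t - ∑ k ∈ Finset.range m, picIter A k t‖ ≤
      ∑' k : ℕ, (L * max b (-a)) ^ (k + m) / (k + m).factorial := by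
  have hs := summable_picIter ha hb hA hL hL0 ht
  have hsum : Summable (fun k : ℕ => (L * max b (-a)) ^ (k + m) / ((k + m).factorial : ℝ)) :=
    (summable_nat_add_iff m).mpr (Real.summable_pow_div_factorial _)
  have heq : Rser A t - ∑ k ∈ Finset.range m, picIter A k t = ∑' k : ℕ, picIter A (k + m) t :=
    sub_eq_iff_eq_add'.mpr (Summable.sum_add_tsum_nat_add m hs).symm
  rw [heq]
  refine (norm_tsum_le_tsum_norm ?_).trans (Summable.tsum_le_tsum ?_ ?_ hsum)
  · exact Summable.of_nonneg_of_le (fun k => norm_nonneg _)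
      (fun k => picIter_norm_le ha hb hA hL hL0 (k + m) ht) hsum
  · exact fun k => picIter_norm_le ha hb hA hL hL0 (k + m) ht
  · exact Summable.of_nonneg_of_le (fun k => norm_nonneg _)
      (fun k => picIter_norm_le ha hb hA hL hL0 (k + m) ht) hsum

lemma tail_tendsto (M : ℝ) :
    Tendsto (fun m : ℕ => ∑' k : ℕ, M ^ (k + m) / (k + m).factorial) atTop (𝓝 0) :=
  tendsto_sum_nat_add (fun n => M ^ n / n.factorial)

lemma Rser_integral_eq (ha : a ≤ 0) (hb : 0 ≤ b) (hA : ContinuousOn A (Icc a b))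
    (hL : ∀ t ∈ Icc a b, ‖A t‖ ≤ L) (hL0 : 0 ≤ L) {t : ℝ} (ht : t ∈ Icc a b) :
    Rser A t = 1 + ∫ s in (0:ℝ)..t, (A s).comp (Rser A s) := by
  have hsub := uIcc_zero_subset ha hb ht
  have hRc := Rser_continuousOn ha hb hA hL hL0
  have hgR : ContinuousOn (fun s => (A s).comp (Rser A s)) (Icc a b) := hA.clm_comp hRc
  have hintk : ∀ k : ℕ, IntervalIntegrable (fun s => (A s).comp (picIter A k s)) volume 0 t :=
    fun k => ((hA.clm_comp (picIter_cont_bound ha hb hA hL hL0 k).1).mono hsub).intervalIntegrable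
  have hintR : IntervalIntegrable (fun s => (A s).comp (Rser A s)) volume 0 t :=
    (hgR.mono hsub).intervalIntegrable
  have h1 : ∀ m : ℕ, (∫ s in (0:ℝ)..t, (A s).comp (∑ k ∈ Finset.range m, picIter A k s))
      = (∑ k ∈ Finset.range (m+1), picIter A k t) - 1 := by
    intro m
    have hc : ∀ s : ℝ, (A s).comp (∑ k ∈ Finset.range m, picIter A k s) =
        ∑ k ∈ Finset.range m, (A s).comp (picIter A k s) := fun s =>
      map_sum (ContinuousLinearMap.compL ℝ E E E (A s)) _ _
    simp only [hc]
    rw [intervalIntegral.integral_finset_sum (fun k _ => hintk k), Finset.sum_range_succ']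
    have : ∀ k, (∫ s in (0:ℝ)..t, (A s).comp (picIter A k s)) = picIter A (k+1) t :=
      fun k => rfl
    simp only [this]
    show _ = _ + picIter A 0 t - 1
    show _ = _ + (1 : E →L[ℝ] E) - 1
    rw [add_sub_cancel_right]
  have h2 : Tendsto (fun m : ℕ => ∑ k ∈ Finset.range (m+1), picIter A k t) atTop
      (𝓝 (Rser A t)) :=
    ((summable_picIter ha hb hA hL hL0 ht).hasSum.tendsto_sum_nat).comp (tendsto_add_atTop_nat 1)
  have h3 : Tendsto (fun m : ℕ => ∫ s in (0:ℝ)..t, (A s).comp (∑ k ∈ Finset.range m, picIter A k s))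
      atTop (𝓝 (∫ s in (0:ℝ)..t, (A s).comp (Rser A s))) := by
    rw [tendsto_iff_norm_sub_tendsto_zero]
    have hPmint : ∀ m : ℕ, IntervalIntegrable
        (fun s => (A s).comp (∑ k ∈ Finset.range m, picIter A k s)) volume 0 t := by
      intro m
      have : ContinuousOn (fun s => ∑ k ∈ Finset.range m, picIter A k s) (Icc a b) :=
        continuousOn_finset_sum _ (fun k _ => (picIter_cont_bound ha hb hA hL hL0 k).1)
      exact ((hA.clm_comp this).mono hsub).intervalIntegrable
    refine squeeze_zero_norm (a := fun m : ℕ =>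
      (L * ∑' k : ℕ, (L * max b (-a)) ^ (k + m) / (k + m).factorial) * |t - 0|) ?_ ?_
    · intro m
      rw [norm_norm, ← intervalIntegral.integral_sub (hPmint m) hintR]
      refine intervalIntegral.norm_integral_le_of_norm_le_const ?_
      intro s hs
      have hs' : s ∈ Icc a b := hsub (uIoc_subset_uIcc hs)
      rw [show ((A s).comp (∑ k ∈ Finset.range m, picIter A k s) - (A s).comp (Rser A s))
          = (A s).comp ((∑ k ∈ Finset.range m, picIter A k s) - Rser A s) from
        (ContinuousLinearMap.comp_sub _ _ _).symm]
      calc ‖(A s).comp ((∑ k ∈ Finset.range m, picIter A k s) - Rser A s)‖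
          ≤ ‖A s‖ * ‖(∑ k ∈ Finset.range m, picIter A k s) - Rser A s‖ :=
            ContinuousLinearMap.opNorm_comp_le _ _
        _ ≤ L * ∑' k : ℕ, (L * max b (-a)) ^ (k + m) / (k + m).factorial := by
            refine mul_le_mul (hL s hs') ?_ (norm_nonneg _) hL0
            rw [norm_sub_rev]
            exact Rser_sub_partial ha hb hA hL hL0 hs' m
    · have := ((tail_tendsto (L * max b (-a))).const_mul L).mul_const |t - 0|
      simpa using this
  have h4 : Tendsto (fun m : ℕ => (∑ k ∈ Finset.range (m+1), picIter A k t) - 1) atTop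
      (𝓝 (Rser A t - 1)) := h2.sub_const 1
  have := tendsto_nhds_unique (by simpa only [h1] using h3 :
    Tendsto (fun m : ℕ => (∑ k ∈ Finset.range (m+1), picIter A k t) - 1) atTop
      (𝓝 (∫ s in (0:ℝ)..t, (A s).comp (Rser A s)))) h4
  rw [this, add_sub_cancel]


lemma Rser_hasDerivAt (ha : a ≤ 0) (hb : 0 ≤ b) (hA : ContinuousOn A (Icc a b))
    (hL : ∀ t ∈ Icc a b, ‖A t‖ ≤ L) (hL0 : 0 ≤ L) {t : ℝ} (ht : t ∈ Ioo a b) :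
    HasDerivAt (Rser A) ((A t).comp (Rser A t)) t := by
  have hgR : ContinuousOn (fun s => (A s).comp (Rser A s)) (Icc a b) :=
    hA.clm_comp (Rser_continuousOn ha hb hA hL hL0)
  have htIcc : t ∈ Icc a b := Ioo_subset_Icc_self ht
  have hnh : Icc a b ∈ 𝓝 t := Icc_mem_nhds ht.1 ht.2
  have hftc : HasDerivAt (fun u => ∫ s in (0:ℝ)..u, (A s).comp (Rser A s))
      ((A t).comp (Rser A t)) t := by
    refine intervalIntegral.integral_hasDerivAt_right
      ((hgR.mono (uIcc_zero_subset ha hb htIcc)).intervalIntegrable) ?_ ?_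
    · exact (hgR.mono Ioo_subset_Icc_self).stronglyMeasurableAtFilter isOpen_Ioo t ht
    · exact hgR.continuousAt hnh
  refine (hftc.const_add (1 : E →L[ℝ] E)).congr_of_eventuallyEq ?_
  exact eventuallyEq_of_mem hnh (fun u hu => Rser_integral_eq ha hb hA hL hL0 hu)

lemma Rser_hasDerivWithinAt_Ici (ha : a ≤ 0) (hb : 0 ≤ b) (hA : ContinuousOn A (Icc a b))
    (hL : ∀ t ∈ Icc a b, ‖A t‖ ≤ L) (hL0 : 0 ≤ L) {t : ℝ} (ht0 : 0 ≤ t) (htb : t < b) :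
    HasDerivWithinAt (Rser A) ((A t).comp (Rser A t)) (Ici t) t := by
  have htIcc : t ∈ Icc a b := ⟨ha.trans ht0, htb.le⟩
  have hgR : ContinuousOn (fun s => (A s).comp (Rser A s)) (Icc a b) :=
    hA.clm_comp (Rser_continuousOn ha hb hA hL hL0)
  have hS : Ici t ∩ Iio b ∈ 𝓝[Ici t] t := inter_mem_nhdsWithin _ (Iio_mem_nhds htb)
  have hSsub : Ici t ∩ Iio b ⊆ Icc a b := fun s hs => ⟨(ha.trans ht0).trans hs.1, hs.2.le⟩
  have hftc : HasDerivWithinAt (fun u => ∫ s in (0:ℝ)..u, (A s).comp (Rser A s))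
      ((A t).comp (Rser A t)) (Ici t) t := by
    refine intervalIntegral.integral_hasDerivWithinAt_right
      ((hgR.mono (uIcc_zero_subset ha hb htIcc)).intervalIntegrable)
      (s := Ici t) (t := Ioi t)
      ⟨Ici t ∩ Iio b, nhdsWithin_mono t Ioi_subset_Ici_self hS, ?_⟩ ?_
    · exact (hgR.mono hSsub).aestronglyMeasurable (measurableSet_Ici.inter measurableSet_Iio)
    · exact (hgR t htIcc).mono_of_mem_nhdsWithin
        (nhdsWithin_mono t Ioi_subset_Ici_self (mem_of_superset hS hSsub))
  refine (hftc.const_add (1 : E →L[ℝ] E)).congr_of_eventuallyEq ?_ ?_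
  · exact eventuallyEq_of_mem (mem_of_superset hS (fun u hu => Rser_integral_eq ha hb hA hL hL0 (hSsub hu)))
      (fun u hu => hu)
  · exact Rser_integral_eq ha hb hA hL hL0 htIcc

lemma picIter_neg (A : ℝ → E →L[ℝ] E) : ∀ (k : ℕ) (t : ℝ),
    picIter (fun s => -A (-s)) k t = picIter A k (-t) := by
  intro k
  induction k with
  | zero => intro t; rfl
  | succ k ih =>
    intro t
    show (∫ s in (0:ℝ)..t, (-A (-s)).comp (picIter (fun s => -A (-s)) k s)) = _
    have hfun : (fun s => (-A (-s)).comp (picIter (fun s => -A (-s)) k s))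
        = fun s => -((fun σ => (A σ).comp (picIter A k σ)) (-s)) := by
      funext s
      rw [ih s, ContinuousLinearMap.neg_comp]
    rw [hfun, intervalIntegral.integral_neg, intervalIntegral.integral_comp_neg
      (fun σ => (A σ).comp (picIter A k σ)), neg_zero]
    show _ = ∫ s in (0:ℝ)..(-t), (A s).comp (picIter A k s)
    rw [intervalIntegral.integral_symm, neg_neg]

lemma Rser_neg (A : ℝ → E →L[ℝ] E) (t : ℝ) : Rser (fun s => -A (-s)) t = Rser A (-t) := by
  unfold Rser
  simp only [picIter_neg]

end Series

lemma gronwallBound_le_aux {L eps t T : ℝ} (hL : 0 ≤ L) (heps : 0 ≤ eps) (ht : 0 ≤ t)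
    (htT : t ≤ T) : gronwallBound 0 L eps t ≤ eps * (T * Real.exp (L * T)) := by
  have hT : 0 ≤ T := ht.trans htT
  rcases eq_or_lt_of_le hL with h | h
  · rw [← h]
    rw [gronwallBound_K0]
    simp only [zero_mul, Real.exp_zero]
    nlinarith [Real.exp_pos (0:ℝ)]
  · rw [gronwallBound_of_K_ne_0 h.ne']
    have h1 : Real.exp (L * t) - 1 ≤ L * t * Real.exp (L * t) := by
      have := Real.add_one_le_exp (-(L * t))
      have hpos := Real.exp_pos (L * t)
      have hinv : Real.exp (-(L*t)) = (Real.exp (L*t))⁻¹ := Real.exp_neg _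
      rw [hinv] at this
      have := mul_le_mul_of_nonneg_left this hpos.le
      rw [mul_inv_cancel₀ hpos.ne'] at this
      nlinarith
    have h2 : Real.exp (L * t) ≤ Real.exp (L * T) :=
      Real.exp_le_exp.mpr (mul_le_mul_of_nonneg_left htT hL)
    have h4 : t * Real.exp (L * t) ≤ T * Real.exp (L * T) :=
      mul_le_mul htT h2 (Real.exp_pos _).le hT
    have h3 : Real.exp (L * t) - 1 ≤ L * T * Real.exp (L * T) := by nlinarith
    show 0 * Real.exp (L * t) + eps / L * (Real.exp (L * t) - 1) ≤ _
    rw [zero_mul, zero_add]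
    refine le_trans (mul_le_mul_of_nonneg_left h3 (by positivity)) (le_of_eq ?_)
    field_simp

section Master

variable {E : Type*} [NormedAddCommGroup E] [NormedSpace ℝ E] [FiniteDimensional ℝ E]

/-- Differentiability of a flow in its initial condition, with derivative given by the
solution `Rser` of the variational equation. -/
lemma flow_hasFDerivAt
    {Ω : Set E} (hΩ : IsOpen Ω) {W : E → E} (hW : ContDiffOn ℝ (⊤:ℕ∞) W Ω)
    {T : ℝ} (hT : 0 ≤ T) {ψ : ℝ → E → E} {p : E} {ρ : ℝ} (hρ : 0 < ρ)
    (hinit : ∀ η ∈ closedBall p ρ, ψ 0 η = η)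
    (hode : ∀ η ∈ closedBall p ρ, ∀ t ∈ Icc 0 T, HasDerivAt (fun s => ψ s η) (W (ψ t η)) t)
    (hmem : ∀ t ∈ Icc 0 T, ψ t p ∈ Ω) {t : ℝ} (ht : t ∈ Icc 0 T) :
    HasFDerivAt (ψ t) (Rser (fun s => fderiv ℝ W (ψ s p)) t) p := by
  set A : ℝ → E →L[ℝ] E := fun s => fderiv ℝ W (ψ s p) with hAdef
  set x : ℝ → E := fun s => ψ s p with hxdef
  have hpmem : p ∈ closedBall p ρ := mem_closedBall_self hρ.le
  have hxc : ContinuousOn x (Icc 0 T) :=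
    fun s hs => ((hode p hpmem s hs).continuousAt).continuousWithinAt
  have hK₀ : IsCompact (x '' Icc 0 T) := isCompact_Icc.image_of_continuousOn hxc
  have hK₀Ω : x '' Icc 0 T ⊆ Ω := image_subset_iff.mpr hmem
  obtain ⟨d, hdpos, hd⟩ := hK₀.exists_thickening_subset_open hΩ hK₀Ω
  set r := d / 2 with hrdef
  have hr : 0 < r := by positivity
  set K := cthickening r (x '' Icc 0 T) with hKdef
  have hKΩ : K ⊆ Ω := (cthickening_subset_thickening' hdpos (by simpa [hrdef] using half_lt_self hdpos) _).trans hd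
  have hKcomp : IsCompact K := hK₀.cthickening
  have hballK : ∀ s ∈ Icc 0 T, closedBall (x s) r ⊆ K :=
    fun s hs => closedBall_subset_cthickening (mem_image_of_mem x hs) r
  have hxK : ∀ s ∈ Icc 0 T, x s ∈ K :=
    fun s hs => self_subset_cthickening _ (mem_image_of_mem x hs)
  have hDVc : ContinuousOn (fderiv ℝ W) Ω := hW.continuousOn_fderiv_of_isOpen hΩ (by exact_mod_cast le_top)
  obtain ⟨L₀, hL₀⟩ := hKcomp.exists_bound_of_continuousOn (hDVc.mono hKΩ)
  set L := max L₀ 0 with hLdef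
  have hL0 : (0:ℝ) ≤ L := le_max_right _ _
  have hLK : ∀ y ∈ K, ‖fderiv ℝ W y‖ ≤ L := fun y hy => (hL₀ y hy).trans (le_max_left _ _)
  have hAc : ContinuousOn A (Icc 0 T) := hDVc.comp hxc hmem
  have hAL : ∀ s ∈ Icc 0 T, ‖A s‖ ≤ L := fun s hs => hLK _ (hxK s hs)
  have hdiffW : ∀ y ∈ Ω, HasFDerivAt W (fderiv ℝ W y) y :=
    fun y hy => ((hW.contDiffAt (hΩ.mem_nhds hy)).differentiableAt (by simp)).hasFDerivAt
  have hlip : ∀ s ∈ Icc 0 T, ∀ y ∈ closedBall (x s) r, ∀ z ∈ closedBall (x s) r,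
      ‖W y - W z‖ ≤ L * ‖y - z‖ := by
    intro s hs y hy z hz
    exact Convex.norm_image_sub_le_of_norm_hasFDerivWithin_le
      (fun w hw => (hdiffW w (hKΩ (hballK s hs hw))).hasFDerivWithinAt)
      (fun w hw => hLK w (hballK s hs hw)) (convex_closedBall _ _) hz hy
  have hexp1 : (1:ℝ) ≤ Real.exp (L * T) := Real.one_le_exp (by positivity)
  -- Grönwall closeness of trajectories, given they stay in the tube
  have key_gron : ∀ η ∈ closedBall p ρ, ∀ τ ∈ Icc 0 T,
      (∀ s ∈ Icc 0 τ, ψ s η ∈ closedBall (x s) r) →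
      ∀ s ∈ Icc 0 τ, dist (ψ s η) (x s) ≤ dist η p * Real.exp (L * s) := by
    intro η hη τ hτ hball
    set sfun : ℝ → Set E := fun σ => if σ ∈ Icc 0 τ then closedBall (x σ) r else (∅ : Set E)
      with hsfun
    have hIccτT : Icc 0 τ ⊆ Icc 0 T := Icc_subset_Icc_right hτ.2
    have hIcoτ : Ico 0 τ ⊆ Icc 0 τ := Ico_subset_Icc_self
    have hv : ∀ σ, LipschitzOnWith L.toNNReal W (sfun σ) := by
      intro σ
      by_cases hσ : σ ∈ Icc 0 τ
      · rw [hsfun]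
        simp only [if_pos hσ]
        apply LipschitzOnWith.of_dist_le_mul
        intro y hy z hz
        rw [Real.coe_toNNReal _ hL0, dist_eq_norm, dist_eq_norm]
        exact hlip σ (hIccτT hσ) y hy z hz
      · rw [hsfun]
        simp only [if_neg hσ]
        exact lipschitzOnWith_empty _ _
    have main := dist_le_of_trajectories_ODE_of_mem (v := fun _ y => W y) (s := sfun) (fun σ _ => hv σ)
      (f := fun s => ψ s η) (g := x) (a := 0) (b := τ) (δ := dist η p)
      (fun σ hσ => (hode η hη σ (hIccτT hσ)).continuousAt.continuousWithinAt)
      (fun σ hσ => (hode η hη σ (hIccτT (hIcoτ hσ))).hasDerivWithinAt)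
      (fun σ hσ => by rw [hsfun]; simp only [if_pos (hIcoτ hσ)]; exact hball σ (hIcoτ hσ))
      (fun σ hσ => (hode p hpmem σ (hIccτT hσ)).continuousAt.continuousWithinAt)
      (fun σ hσ => (hode p hpmem σ (hIccτT (hIcoτ hσ))).hasDerivWithinAt)
      (fun σ hσ => by
        rw [hsfun]; simp only [if_pos (hIcoτ hσ)]
        exact mem_closedBall_self hr.le)
      (by show dist (ψ 0 η) (ψ 0 p) ≤ dist η p
          rw [hinit η hη, hinit p hpmem])
    intro s hs
    have := main s hs
    rwa [Real.coe_toNNReal _ hL0, sub_zero] at this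
  set ρ' := min ρ (r / (2 * Real.exp (L * T))) with hρ'def
  have hρ'pos : 0 < ρ' := lt_min hρ (by positivity)
  have hρ'r : ρ' ≤ r := by
    have : r / (2 * Real.exp (L * T)) ≤ r / 2 := by
      apply div_le_div_of_nonneg_left hr.le (by norm_num)
      nlinarith
    have := (min_le_right ρ _).trans this
    linarith
  -- bootstrap: trajectories starting close stay in the tube
  have hstay : ∀ η, dist η p ≤ ρ' → ∀ s ∈ Icc 0 T, ψ s η ∈ closedBall (x s) r := by
    intro η hηρ'
    have hηρ : η ∈ closedBall p ρ := mem_closedBall.mpr (hηρ'.trans (min_le_left _ _))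
    have hgc : ContinuousOn (fun s => ψ s η) (Icc 0 T) :=
      fun s hs => (hode η hηρ s hs).continuousAt.continuousWithinAt
    have hhalf : ∀ s ∈ Icc 0 T, dist η p * Real.exp (L * s) ≤ r / 2 := by
      intro s hs
      have h1 : Real.exp (L * s) ≤ Real.exp (L * T) :=
        Real.exp_le_exp.mpr (mul_le_mul_of_nonneg_left hs.2 hL0)
      have h2 : dist η p ≤ r / (2 * Real.exp (L * T)) := hηρ'.trans (min_le_right _ _)
      calc dist η p * Real.exp (L * s)
          ≤ (r / (2 * Real.exp (L * T))) * Real.exp (L * T) :=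
            mul_le_mul h2 h1 (Real.exp_pos _).le (by positivity)
        _ = r / 2 := by
            have hne := (Real.exp_pos (L*T)).ne'
            field_simp
    set S := {τ ∈ Icc 0 T | ∀ s ∈ Icc 0 τ, ψ s η ∈ closedBall (x s) r} with hSdef
    have h0S : (0:ℝ) ∈ S := by
      refine ⟨⟨le_rfl, hT⟩, ?_⟩
      intro s hs
      have hs0 : s = 0 := le_antisymm hs.2 hs.1
      subst hs0
      rw [hinit η hηρ, mem_closedBall]
      show dist η (ψ 0 p) ≤ r
      rw [hinit p hpmem]
      exact hηρ'.trans hρ'r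
    have hSbdd : BddAbove S := ⟨T, fun τ hτ => hτ.1.2⟩
    have hSne : S.Nonempty := ⟨0, h0S⟩
    set u := sSup S with hudef
    have huIcc : u ∈ Icc 0 T := ⟨le_csSup hSbdd h0S, csSup_le hSne (fun τ hτ => hτ.1.2)⟩
    have huS : u ∈ S := by
      refine ⟨huIcc, ?_⟩
      intro s hs
      rcases lt_or_eq_of_le hs.2 with hlt | heq
      · obtain ⟨τ, hτS, hsτ⟩ := exists_lt_of_lt_csSup hSne hlt
        exact hτS.2 s ⟨hs.1, hsτ.le⟩
      · rcases eq_or_lt_of_le hs.1 with h0 | hpos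
        · have : s = 0 := h0.symm
          subst this
          exact h0S.2 0 ⟨le_rfl, le_rfl⟩
        · have hsIcc : s ∈ Icc 0 T := ⟨hs.1, heq.le.trans huIcc.2⟩
          have hne : (𝓝[<] s).NeBot := nhdsWithin_Iio_self_neBot' ⟨0, hpos⟩
          have hIci0 : Ici (0:ℝ) ∈ 𝓝 s := mem_of_superset (Ioi_mem_nhds hpos) Ioi_subset_Ici_self
          have hIco : Ico 0 s ∈ 𝓝[<] s := by
            have := inter_mem_nhdsWithin (Iio s) hIci0
            rwa [inter_comm, Ici_inter_Iio] at this
          have hc : ContinuousWithinAt (fun σ => dist (ψ σ η) (x σ)) (Icc 0 T) s :=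
            ((hgc s hsIcc).dist (hxc s hsIcc))
          have htend : Tendsto (fun σ => dist (ψ σ η) (x σ)) (𝓝[<] s)
              (𝓝 (dist (ψ s η) (x s))) :=
            hc.mono_of_mem_nhdsWithin (mem_of_superset hIco
              (fun σ hσ => ⟨hσ.1, hσ.2.le.trans hsIcc.2⟩))
          rw [mem_closedBall]
          refine le_of_tendsto htend ?_
          filter_upwards [hIco] with σ hσ
          have hσu : σ < u := heq ▸ hσ.2
          obtain ⟨τ, hτS, hστ⟩ := exists_lt_of_lt_csSup hSne hσu
          exact mem_closedBall.mp (hτS.2 σ ⟨hσ.1, hστ.le⟩)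
    have huT : u = T := by
      by_contra hneq
      have hult : u < T := lt_of_le_of_ne huIcc.2 hneq
      have hhalfu : ∀ s ∈ Icc 0 u, dist (ψ s η) (x s) ≤ r/2 :=
        fun s hs => (key_gron η hηρ u huIcc huS.2 s hs).trans
          (hhalf s ⟨hs.1, hs.2.trans huIcc.2⟩)
      have hcont : ContinuousWithinAt (fun σ => dist (ψ σ η) (x σ)) (Icc 0 T) u :=
        ((hgc u huIcc).dist (hxc u huIcc))
      have hlt' : dist (ψ u η) (x u) < r :=
        lt_of_le_of_lt (hhalfu u ⟨huIcc.1, le_rfl⟩) (by linarith)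
      have hev : ∀ᶠ σ in 𝓝[Icc 0 T] u, dist (ψ σ η) (x σ) < r :=
        hcont (Iio_mem_nhds hlt')
      obtain ⟨ε, hεpos, hε⟩ := Metric.mem_nhdsWithin_iff.mp hev
      set τ := min T (u + ε/2) with hτdef
      have huτ : u < τ := lt_min hult (by linarith)
      have hτS : τ ∈ S := by
        refine ⟨⟨huIcc.1.trans huτ.le, min_le_left _ _⟩, ?_⟩
        intro s hs
        rcases le_or_gt s u with hle | hgt
        · exact huS.2 s ⟨hs.1, hle⟩
        · have hsT : s ∈ Icc 0 T := ⟨hs.1, hs.2.trans (min_le_left _ _)⟩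
          have hball : s ∈ Metric.ball u ε := by
            rw [mem_ball, Real.dist_eq, abs_of_pos (sub_pos.mpr hgt)]
            have : s ≤ u + ε/2 := hs.2.trans (min_le_right _ _)
            linarith
          exact mem_closedBall.mpr (le_of_lt (hε ⟨hball, hsT⟩))
      have := le_csSup hSbdd hτS
      exact absurd this (not_le.mpr huτ)
    intro s hs
    rw [← huT] at hs
    exact huS.2 s hs
  have hclose : ∀ η, dist η p ≤ ρ' → ∀ s ∈ Icc 0 T,
      dist (ψ s η) (x s) ≤ dist η p * Real.exp (L * T) := by
    intro η hη s hs
    have hηρ : η ∈ closedBall p ρ := mem_closedBall.mpr (hη.trans (min_le_left _ _))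
    refine (key_gron η hηρ T ⟨hT, le_rfl⟩ (hstay η hη) s hs).trans ?_
    exact mul_le_mul_of_nonneg_left
      (Real.exp_le_exp.mpr (mul_le_mul_of_nonneg_left hs.2 hL0)) dist_nonneg
  -- the little-o estimate
  rw [hasFDerivAt_iff_isLittleO_nhds_zero, Asymptotics.isLittleO_iff]
  intro c hc
  set CC := T * Real.exp (L * T) * Real.exp (L * T) + 1 with hCCdef
  have hCCpos : 0 < CC := by positivity
  set ε₁ := c / CC with hε₁def
  have hε₁pos : 0 < ε₁ := by positivity
  have hε₁CC : ε₁ * CC = c := div_mul_cancel₀ c hCCpos.ne'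
  have hunif := hKcomp.uniformContinuousOn_of_continuous (hDVc.mono hKΩ)
  rw [Metric.uniformContinuousOn_iff] at hunif
  obtain ⟨δ₁, hδ₁pos, hδ₁⟩ := hunif ε₁ hε₁pos
  set δ₂ := min r (δ₁/2) with hδ₂def
  have hδ₂pos : 0 < δ₂ := lt_min hr (by linarith)
  have hTaylor : ∀ s ∈ Icc 0 T, ∀ y ∈ closedBall (x s) δ₂,
      ‖W y - W (x s) - A s (y - x s)‖ ≤ ε₁ * ‖y - x s‖ := by
    intro s hs y hy
    have hsubK : closedBall (x s) δ₂ ⊆ K :=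
      (closedBall_subset_closedBall (min_le_left _ _)).trans (hballK s hs)
    refine Convex.norm_image_sub_le_of_norm_hasFDerivWithin_le'
      (f' := fun w => fderiv ℝ W w) (φ := A s)
      (fun w hw => (hdiffW w (hKΩ (hsubK hw))).hasFDerivWithinAt)
      (fun w hw => ?_) (convex_closedBall _ _) (mem_closedBall_self hδ₂pos.le) hy
    have hd : dist w (x s) < δ₁ := by
      have := mem_closedBall.mp hw
      have h2 : δ₂ ≤ δ₁/2 := min_le_right _ _
      linarith
    have := hδ₁ w (hsubK hw) (x s) (hxK s hs) hd
    rw [dist_eq_norm] at this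
    exact this.le
  set δ := min ρ' (δ₂ / (Real.exp (L * T) + 1)) with hδdef
  have hδpos : 0 < δ := lt_min hρ'pos (by positivity)
  filter_upwards [Metric.closedBall_mem_nhds (0:E) hδpos] with h hh
  have hhnorm : ‖h‖ ≤ δ := by
    rw [mem_closedBall, dist_zero_right] at hh
    exact hh
  set η := p + h with hηdef
  have hdist : dist η p = ‖h‖ := by
    rw [hηdef, dist_eq_norm, add_sub_cancel_left]
  have hηρ' : dist η p ≤ ρ' := by rw [hdist]; exact hhnorm.trans (min_le_left _ _)
  have hηρ : η ∈ closedBall p ρ := mem_closedBall.mpr (hηρ'.trans (min_le_left _ _))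
  -- the defect function z
  set z : ℝ → E := fun s => ψ s η - x s - (Rser A s) h with hzdef
  have hz0 : z 0 = 0 := by
    show ψ 0 η - ψ 0 p - (Rser A 0) h = 0
    rw [hinit η hηρ, hinit p hpmem, Rser_zero, hηdef]
    simp
  have hδ₂close : ∀ s ∈ Icc 0 T, ψ s η ∈ closedBall (x s) δ₂ := by
    intro s hs
    rw [mem_closedBall]
    refine (hclose η hηρ' s hs).trans ?_
    rw [hdist]
    have h1 : ‖h‖ ≤ δ₂ / (Real.exp (L * T) + 1) := hhnorm.trans (min_le_right _ _)
    have h2 : Real.exp (L*T) > 0 := Real.exp_pos _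
    calc ‖h‖ * Real.exp (L*T) ≤ (δ₂ / (Real.exp (L * T) + 1)) * (Real.exp (L*T) + 1) := by
          refine mul_le_mul h1 (by linarith) h2.le (by positivity)
      _ = δ₂ := by
            have hne : Real.exp (L*T) + 1 ≠ 0 := by positivity
            field_simp
  set ε₂ := ε₁ * (‖h‖ * Real.exp (L * T)) with hε₂def
  have hε₂0 : 0 ≤ ε₂ := by positivity
  have hzc : ContinuousOn z (Icc 0 t) := by
    have hIccsub : Icc (0:ℝ) t ⊆ Icc 0 T := Icc_subset_Icc_right ht.2
    have h1 : ContinuousOn (fun s => ψ s η) (Icc 0 t) :=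
      fun s hs => (hode η hηρ s (hIccsub hs)).continuousAt.continuousWithinAt
    have h2 : ContinuousOn x (Icc 0 t) := hxc.mono hIccsub
    have h3 : ContinuousOn (fun s => (Rser A s) h) (Icc 0 t) :=
      ((Rser_continuousOn le_rfl hT hAc hAL hL0).mono hIccsub).clm_apply continuousOn_const
    exact (h1.sub h2).sub h3
  have hz' : ∀ s ∈ Ico 0 t, HasDerivWithinAt z
      (W (ψ s η) - W (x s) - ((A s).comp (Rser A s)) h) (Ici s) s := by
    intro s hs
    have hsT : s ∈ Icc 0 T := ⟨hs.1, (hs.2.le.trans ht.2)⟩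
    have h1 : HasDerivWithinAt (fun σ => ψ σ η) (W (ψ s η)) (Ici s) s :=
      (hode η hηρ s hsT).hasDerivWithinAt
    have h2 : HasDerivWithinAt x (W (x s)) (Ici s) s :=
      (hode p hpmem s hsT).hasDerivWithinAt
    have h3 : HasDerivWithinAt (fun σ => (Rser A σ) h)
        (((A s).comp (Rser A s)) h) (Ici s) s := by
      have := (Rser_hasDerivWithinAt_Ici le_rfl hT hAc hAL hL0 hs.1
        (lt_of_lt_of_le hs.2 ht.2)).clm_apply (hasDerivWithinAt_const s (Ici s) h)
      simpa using this
    exact (h1.sub h2).sub h3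
  have hbound : ∀ s ∈ Ico 0 t,
      ‖W (ψ s η) - W (x s) - ((A s).comp (Rser A s)) h‖ ≤ L * ‖z s‖ + ε₂ := by
    intro s hs
    have hsT : s ∈ Icc 0 T := ⟨hs.1, (hs.2.le.trans ht.2)⟩
    have hsplit : W (ψ s η) - W (x s) - ((A s).comp (Rser A s)) h
        = A s (z s) + (W (ψ s η) - W (x s) - A s (ψ s η - x s)) := by
      rw [hzdef]
      simp only [ContinuousLinearMap.comp_apply, map_sub]
      abel
    rw [hsplit]
    refine (norm_add_le _ _).trans ?_
    have hterm1 : ‖A s (z s)‖ ≤ L * ‖z s‖ :=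
      le_trans ((A s).le_opNorm (z s)) (mul_le_mul_of_nonneg_right (hAL s hsT) (norm_nonneg _))
    have hterm2 : ‖W (ψ s η) - W (x s) - A s (ψ s η - x s)‖ ≤ ε₂ := by
      refine le_trans (hTaylor s hsT _ (hδ₂close s hsT)) ?_
      rw [hε₂def]
      refine mul_le_mul_of_nonneg_left ?_ hε₁pos.le
      rw [← dist_eq_norm]
      refine (hclose η hηρ' s hsT).trans ?_
      rw [hdist]
    exact add_le_add hterm1 hterm2
  have hgron := norm_le_gronwallBound_of_norm_deriv_right_le (a := 0) (b := t) hzc hz'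
    (by rw [hz0, norm_zero]) hbound t ⟨ht.1, le_rfl⟩
  have hzt : ‖z t‖ ≤ ε₂ * (T * Real.exp (L * T)) := by
    refine hgron.trans ?_
    rw [sub_zero]
    exact gronwallBound_le_aux hL0 hε₂0 ht.1 ht.2
  have hfinal : ‖z t‖ ≤ c * ‖h‖ := by
    refine hzt.trans ?_
    rw [hε₂def]
    have hTe : T * Real.exp (L * T) * Real.exp (L * T) ≤ CC := by rw [hCCdef]; linarith
    calc ε₁ * (‖h‖ * Real.exp (L * T)) * (T * Real.exp (L * T))
        = ε₁ * (T * Real.exp (L * T) * Real.exp (L * T)) * ‖h‖ := by ring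
      _ ≤ ε₁ * CC * ‖h‖ := by
          refine mul_le_mul_of_nonneg_right (mul_le_mul_of_nonneg_left hTe hε₁pos.le)
            (norm_nonneg _)
      _ = c * ‖h‖ := by rw [hε₁CC]
  calc ‖ψ t (p + h) - ψ t p - (Rser A t) h‖ = ‖z t‖ := by rw [hzdef, hηdef, hxdef]
    _ ≤ c * ‖h‖ := hfinal

end Master

end ODETheory

section Helpers
set_option linter.unusedSectionVars false
open Metric Filter Topology

lemma fderiv_apply_eq_sum_pd {n : ℕ} {f : Vec n → ℝ} {x : Vec n}
    (hf : DifferentiableAt ℝ f x) (u : Vec n) :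
    fderiv ℝ f x u = ∑ l, u l * pd l f x := by
  have hu : u = ∑ l, u l • (Pi.single l 1 : Vec n) := by
    conv_lhs => rw [← Finset.univ_sum_single u]
    refine Finset.sum_congr rfl (fun l _ => ?_)
    rw [← Pi.single_smul, smul_eq_mul, mul_one]
  conv_lhs => rw [hu]
  rw [map_sum]
  refine Finset.sum_congr rfl (fun l _ => ?_)
  rw [map_smul, smul_eq_mul]
  rfl

lemma fderiv_V_apply_fst {n : ℕ} {U : Set (Vec n)} (hU : IsOpen U)
    {Pb : Vec n → Fin n → Fin n → ℝ} (hPb : IsBivectorOn U Pb)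
    {V : Pt n → Pt n} (hV : IsSpray U Pb V) {w : Pt n} (hw : w.1 ∈ U) (u : Pt n) (r : Fin n) :
    (fderiv ℝ V w u).1 r
      = ∑ p, ((∑ l, u.1 l * pd l (fun y => Pb y p r) w.1) * w.2 p + Pb w.1 p r * u.2 p) := by
  have hΩ : IsOpen (U ×ˢ (univ : Set (Vec n))) := hU.prod isOpen_univ
  have hwΩ : w ∈ U ×ˢ (univ : Set (Vec n)) := ⟨hw, mem_univ _⟩
  have hdV : DifferentiableAt ℝ V w :=
    (hV.smooth.contDiffAt (hΩ.mem_nhds hwΩ)).differentiableAt (by simp)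
  set CLM : Pt n →L[ℝ] ℝ := (ContinuousLinearMap.proj (R := ℝ) (φ := fun _ : Fin n => ℝ) r).comp
    (ContinuousLinearMap.fst ℝ (Vec n) (Vec n)) with hCLMdef
  have h1 : fderiv ℝ (fun η => (V η).1 r) w = CLM.comp (fderiv ℝ V w) :=
    (CLM.hasFDerivAt.comp w hdV.hasFDerivAt).fderiv
  have hPbd : ∀ p, DifferentiableAt ℝ (fun y => Pb y p r) w.1 := fun p =>
    ((hPb.1 p r).contDiffAt (hU.mem_nhds hw)).differentiableAt (by simp)
  set F' : Fin n → (Pt n →L[ℝ] ℝ) := fun p =>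
    (Pb w.1 p r) • ((ContinuousLinearMap.proj (R := ℝ) (φ := fun _ : Fin n => ℝ) p).comp
        (ContinuousLinearMap.snd ℝ (Vec n) (Vec n)))
      + (w.2 p) • ((fderiv ℝ (fun y => Pb y p r) w.1).comp
        (ContinuousLinearMap.fst ℝ (Vec n) (Vec n))) with hF'def
  have hg : ∀ p : Fin n, HasFDerivAt (fun η : Pt n => Pb η.1 p r * η.2 p) (F' p) w := by
    intro p
    have hA : HasFDerivAt (fun η : Pt n => Pb η.1 p r)
        ((fderiv ℝ (fun y => Pb y p r) w.1).comp (ContinuousLinearMap.fst ℝ (Vec n) (Vec n))) w :=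
      (hPbd p).hasFDerivAt.comp w (ContinuousLinearMap.fst ℝ (Vec n) (Vec n)).hasFDerivAt
    have hB : HasFDerivAt (fun η : Pt n => η.2 p)
        ((ContinuousLinearMap.proj (R := ℝ) (φ := fun _ : Fin n => ℝ) p).comp
          (ContinuousLinearMap.snd ℝ (Vec n) (Vec n))) w :=
      ((ContinuousLinearMap.proj (R := ℝ) (φ := fun _ : Fin n => ℝ) p).comp
          (ContinuousLinearMap.snd ℝ (Vec n) (Vec n))).hasFDerivAt
    exact hA.mul hB
  have hgsum : HasFDerivAt (fun η : Pt n => ∑ p, Pb η.1 p r * η.2 p)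
      (∑ p, F' p) w := HasFDerivAt.fun_sum (fun p _ => hg p)
  have heq : (fun η : Pt n => (V η).1 r) =ᶠ[𝓝 w] (fun η => ∑ p, Pb η.1 p r * η.2 p) := by
    filter_upwards [hΩ.mem_nhds hwΩ] with η hη
    rw [hV.base η hη.1]
    rfl
  have h2 : fderiv ℝ (fun η => (V η).1 r) w = ∑ p, F' p := by
    rw [heq.fderiv_eq]
    exact hgsum.fderiv
  have hcomb := congrArg (fun (T : Pt n →L[ℝ] ℝ) => T u) (h1.symm.trans h2)
  simp only [ContinuousLinearMap.coe_comp', Function.comp_apply, hCLMdef,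
    ContinuousLinearMap.sum_apply, ContinuousLinearMap.add_apply,
    ContinuousLinearMap.coe_smul', Pi.smul_apply, ContinuousLinearMap.proj_apply,
    ContinuousLinearMap.coe_fst', ContinuousLinearMap.coe_snd', smul_eq_mul, hF'def] at hcomb
  rw [hcomb]
  refine Finset.sum_congr rfl (fun p _ => ?_)
  rw [fderiv_apply_eq_sum_pd (hPbd p) u.1]
  ring

lemma sum_comm₁₃ {n : ℕ} (f : Fin n → Fin n → Fin n → ℝ) :
    ∑ p, ∑ q, ∑ s, f p q s = ∑ s, ∑ q, ∑ p, f p q s :=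
  calc ∑ p, ∑ q, ∑ s, f p q s
      = ∑ p, ∑ s, ∑ q, f p q s := Finset.sum_congr rfl (fun p _ => Finset.sum_comm)
    _ = ∑ s, ∑ p, ∑ q, f p q s := Finset.sum_comm
    _ = ∑ s, ∑ q, ∑ p, f p q s := Finset.sum_congr rfl (fun s _ => Finset.sum_comm)

end Helpers

/-- **Lemma.** Let `a(t) = φ_t(ξ)` with base `γ`, and for `v₀ ∈ T_ξ(T*M)` let
`v_t = (dφ_t)(v₀)` with components `(v̄_t, θ_{v_t})` with respect to the
torsion-free classical connection `Γ`.  Then `∇̄_a(v̄) = π♯(θ_v)`. -/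
theorem nbar_of_pushed_vector_eq_sharp_vertical
    {n : ℕ} (U : Set (Vec n)) (hU : IsOpen U)
    (Pb : Vec n → Fin n → Fin n → ℝ) (hPb : IsPoissonOn U Pb)
    (V : Pt n → Pt n) (hV : IsSpray U Pb V)
    (D : Set (ℝ × Pt n)) (φ : ℝ → Pt n → Pt n) (hφ : IsLocalFlow U V D φ)
    (Γ : Vec n → Fin n → Fin n → Fin n → ℝ)
    (hΓsym : ∀ x p q r, Γ x q p r = Γ x p q r)  -- torsion-free
    (hΓ : ∀ p q r, ContDiffOn ℝ (⊤ : ℕ∞) (fun x => Γ x p q r) U)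
    (ξ : Pt n) (hξ : ∀ t ∈ Icc (0:ℝ) 1, (t, ξ) ∈ D)
    (v0 : Pt n) (t : ℝ) (ht : t ∈ Icc (0:ℝ) 1) :
    covAlong (GbarTM Pb Γ) (fun s => (φ s ξ).2) (fun s => (φ s ξ).1)
        (fun s => (fderiv ℝ (φ s) ξ v0).1) t
      = sharp Pb ((φ t ξ).1) (vert Γ (φ t ξ) (fderiv ℝ (φ t) ξ v0)) := by
  classical
  open Metric Filter Topology in
  have hΩ : IsOpen (U ×ˢ (univ : Set (Vec n))) := hU.prod isOpen_univ
  -- a uniform tube around `[0,1] × {ξ}` inside the domain of the flow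
  have hK₁ : IsCompact ((Icc (0:ℝ) 1) ×ˢ ({ξ} : Set (Pt n))) :=
    isCompact_Icc.prod isCompact_singleton
  have hK₁D : (Icc (0:ℝ) 1) ×ˢ ({ξ} : Set (Pt n)) ⊆ D := by
    rintro ⟨s, η⟩ ⟨hs, hη⟩
    rw [mem_singleton_iff] at hη
    subst hη
    exact hξ s hs
  obtain ⟨c, hcpos, hc⟩ := hK₁.exists_thickening_subset_open hφ.isOpen_dom hK₁D
  set ρ := c/2 with hρdef
  have hρpos : 0 < ρ := by positivity
  have hD : ∀ s ∈ Icc (-ρ) (1+ρ), ∀ η ∈ Metric.closedBall ξ ρ, (s, η) ∈ D := by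
    intro s hs η hη
    apply hc
    rw [Metric.mem_thickening_iff]
    refine ⟨(max 0 (min 1 s), ξ), ?_, ?_⟩
    · exact ⟨⟨le_max_left _ _, max_le zero_le_one (min_le_left _ _)⟩, rfl⟩
    · have hss : |s - max 0 (min 1 s)| ≤ ρ := by
        rcases le_total s 0 with h | h
        · rw [min_eq_right (h.trans zero_le_one), max_eq_left h]
          rw [sub_zero]
          exact abs_le.mpr ⟨hs.1, h.trans hρpos.le⟩
        · rcases le_total s 1 with h1 | h1
          · rw [min_eq_right h1, max_eq_right h]
            simpa using hρpos.le
          · rw [min_eq_left h1, max_eq_right zero_le_one]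
            exact abs_le.mpr ⟨by linarith, by linarith [hs.2]⟩
      rw [Prod.dist_eq]
      refine max_lt ?_ ?_
      · rw [Real.dist_eq]
        calc |s - max 0 (min 1 s)| ≤ ρ := hss
          _ < c := by rw [hρdef]; linarith
      · calc dist η ξ ≤ ρ := Metric.mem_closedBall.mp hη
          _ < c := by rw [hρdef]; linarith
  have hmemΩ : ∀ s ∈ Icc (-ρ) (1+ρ), φ s ξ ∈ U ×ˢ (univ : Set (Vec n)) := fun s hs =>
    ⟨hφ.invariant s ξ (hD s hs ξ (Metric.mem_closedBall_self hρpos.le)), mem_univ _⟩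
  set A : ℝ → Pt n →L[ℝ] Pt n := fun s => fderiv ℝ V (φ s ξ) with hAdef
  -- forward differentiability of the flow in the initial condition
  have hfwd : ∀ s ∈ Icc (0:ℝ) (1+ρ), HasFDerivAt (φ s) (Rser A s) ξ := by
    intro s hs
    exact flow_hasFDerivAt hΩ hV.smooth (T := 1+ρ) (by linarith) (p := ξ) hρpos
      (fun η _ => hφ.init η)
      (fun η hη u hu => hφ.hasDeriv u η (hD u ⟨by linarith [hu.1], hu.2⟩ η hη))
      (fun u hu => hmemΩ u ⟨by linarith [hu.1], hu.2⟩) hs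
  -- backward differentiability (reversed flow)
  have hbwd : ∀ s ∈ Icc (0:ℝ) ρ, HasFDerivAt (φ (-s)) (Rser A (-s)) ξ := by
    intro s hs
    have hmas := flow_hasFDerivAt hΩ hV.smooth.neg (T := ρ) hρpos.le (p := ξ) hρpos
      (ψ := fun u η => φ (-u) η)
      (fun η _ => by show φ (-0) η = η; rw [neg_zero]; exact hφ.init η)
      (fun η hη u hu => by
        have hmemD : (-u, η) ∈ D :=
          hD (-u) ⟨by linarith [hu.2], by linarith [hu.1, hρpos.le]⟩ η hη
        have h := hφ.hasDeriv (-u) η hmemD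
        have h2 := h.scomp u (hasDerivAt_neg u)
        simpa [Function.comp_def] using h2)
      (fun u hu => hmemΩ (-u) ⟨by linarith [hu.2], by linarith [hu.1, hρpos.le]⟩) hs
    have hAb : (fun u => fderiv ℝ (fun y => -V y) ((fun u η => φ (-u) η) u ξ))
        = fun u => -A (-u) := by
      funext u
      show fderiv ℝ (fun y => -V y) (φ (-u) ξ) = -A (-u)
      rw [hAdef, fderiv_fun_neg]
    rw [hAb, Rser_neg] at hmas
    exact hmas
  have hIccJ : t ∈ Icc (-ρ) (1+ρ) := ⟨by linarith [ht.1], by linarith [ht.2]⟩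
  have hfds : ∀ s ∈ Icc (-ρ) (1+ρ), fderiv ℝ (φ s) ξ = Rser A s := by
    intro s hs
    rcases le_total 0 s with h | h
    · exact (hfwd s ⟨h, hs.2⟩).fderiv
    · have := (hbwd (-s) ⟨by linarith, by linarith [hs.1]⟩).fderiv
      rwa [neg_neg] at this
  -- continuity and boundedness of `A`
  have hxc : ContinuousOn (fun s => φ s ξ) (Icc (-ρ) (1+ρ)) := fun s hs =>
    (hφ.hasDeriv s ξ (hD s hs ξ (Metric.mem_closedBall_self hρpos.le))).continuousAt.continuousWithinAt
  have hAc : ContinuousOn A (Icc (-ρ) (1+ρ)) :=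
    (hV.smooth.continuousOn_fderiv_of_isOpen hΩ (by exact_mod_cast le_top)).comp hxc hmemΩ
  obtain ⟨L₀, hL₀⟩ := isCompact_Icc.exists_bound_of_continuousOn hAc
  have hAL : ∀ s ∈ Icc (-ρ) (1+ρ), ‖A s‖ ≤ max L₀ 0 :=
    fun s hs => (hL₀ s hs).trans (le_max_left _ _)
  have hL0 : (0:ℝ) ≤ max L₀ 0 := le_max_right _ _
  -- derivative of the variational solution
  have hRd : HasDerivAt (Rser A) ((A t).comp (Rser A t)) t :=
    Rser_hasDerivAt (by linarith) (by linarith) hAc hAL hL0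
      ⟨by linarith [ht.1], by linarith [ht.2]⟩
  set vt := fderiv ℝ (φ t) ξ v0 with hvtdef
  have hFd : HasDerivAt (fun s => fderiv ℝ (φ s) ξ v0) ((A t) vt) t := by
    have h1 : HasDerivAt (fun s => (Rser A s) v0) (((A t).comp (Rser A t)) v0) t := by
      have := hRd.clm_apply (hasDerivAt_const t v0)
      simpa using this
    have h2 : (fun s => fderiv ℝ (φ s) ξ v0) =ᶠ[𝓝 t] (fun s => (Rser A s) v0) := by
      filter_upwards [Ioo_mem_nhds (show -ρ < t by linarith [ht.1])
        (show t < 1+ρ by linarith [ht.2])] with s hsp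
      rw [hfds s ⟨hsp.1.le, hsp.2.le⟩]
    have h3 := h1.congr_of_eventuallyEq h2
    have h4 : ((A t).comp (Rser A t)) v0 = (A t) vt := by
      rw [ContinuousLinearMap.comp_apply, hvtdef, hfds t hIccJ]
    rwa [h4] at h3
  have hwU : (φ t ξ).1 ∈ U := hφ.invariant t ξ (hξ t ht)
  have hderiv_comp : ∀ r : Fin n,
      deriv (fun s => (fderiv ℝ (φ s) ξ v0).1 r) t = ((A t) vt).1 r := by
    intro r
    have hclm := ((ContinuousLinearMap.proj (R := ℝ) (φ := fun _ : Fin n => ℝ) r).comp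
      (ContinuousLinearMap.fst ℝ (Vec n) (Vec n))).hasFDerivAt.comp_hasDerivAt t hFd
    have hC : HasDerivAt (fun s => (fderiv ℝ (φ s) ξ v0).1 r) (((A t) vt).1 r) t := by
      simpa [Function.comp_def] using hclm
    exact hC.deriv
  have hAval : ∀ r, ((A t) vt).1 r = ∑ p, ((∑ l, vt.1 l * pd l (fun y => Pb y p r) (φ t ξ).1)
      * (φ t ξ).2 p + Pb (φ t ξ).1 p r * vt.2 p) := by
    intro r
    rw [hAdef]
    exact fderiv_V_apply_fst hU hPb.1 hV hwU vt r
  -- the final pointwise computation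
  funext r
  show deriv (fun s => (fderiv ℝ (φ s) ξ v0).1 r) t
      + ∑ p, ∑ q, (φ t ξ).2 p * (fderiv ℝ (φ t) ξ v0).1 q * GbarTM Pb Γ ((φ t ξ).1) p q r
    = sharp Pb ((φ t ξ).1) (vert Γ (φ t ξ) (fderiv ℝ (φ t) ξ v0)) r
  rw [hderiv_comp r, hAval r]
  simp only [sharp, vert, GbarTM, ← hvtdef]
  set X := (φ t ξ).1 with hXdef
  set a := (φ t ξ).2 with hadef
  have e1 : ∑ p, (∑ l, vt.1 l * pd l (fun y => Pb y p r) X) * a p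
      = ∑ p, ∑ q, a p * vt.1 q * pd q (fun y => Pb y p r) X := by
    refine Finset.sum_congr rfl (fun p _ => ?_)
    rw [Finset.sum_mul]
    exact Finset.sum_congr rfl (fun l _ => by ring)
  have e2 : ∑ p, ∑ q, a p * vt.1 q * (∑ s, Pb X s r * Γ X q s p)
      = ∑ q, Pb X q r * (∑ p, ∑ s, Γ X p q s * vt.1 p * a s) :=
    calc ∑ p, ∑ q, a p * vt.1 q * (∑ s, Pb X s r * Γ X q s p)
        = ∑ p, ∑ q, ∑ s, a p * vt.1 q * (Pb X s r * Γ X q s p) := by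
          refine Finset.sum_congr rfl (fun p _ => Finset.sum_congr rfl (fun q _ => ?_))
          rw [Finset.mul_sum]
      _ = ∑ s, ∑ q, ∑ p, a p * vt.1 q * (Pb X s r * Γ X q s p) := sum_comm₁₃ _
      _ = ∑ q, Pb X q r * (∑ p, ∑ s, Γ X p q s * vt.1 p * a s) := by
          refine Finset.sum_congr rfl (fun α _ => ?_)
          rw [Finset.mul_sum]
          refine Finset.sum_congr rfl (fun β _ => ?_)
          rw [Finset.mul_sum]
          exact Finset.sum_congr rfl (fun γ _ => by ring)
  calc (∑ p, ((∑ l, vt.1 l * pd l (fun y => Pb y p r) X) * a p + Pb X p r * vt.2 p))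
      + ∑ p, ∑ q, a p * vt.1 q * (-(∑ s, Pb X s r * Γ X q s p) - pd q (fun y => Pb y p r) X)
      = ((∑ p, ∑ q, a p * vt.1 q * pd q (fun y => Pb y p r) X) + ∑ p, Pb X p r * vt.2 p)
        + (-(∑ q, Pb X q r * (∑ p, ∑ s, Γ X p q s * vt.1 p * a s))
           - ∑ p, ∑ q, a p * vt.1 q * pd q (fun y => Pb y p r) X) := by
        rw [Finset.sum_add_distrib, e1, ← e2]
        congr 1
        rw [← Finset.sum_neg_distrib, ← Finset.sum_sub_distrib]
        refine Finset.sum_congr rfl (fun p _ => ?_)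
        rw [← Finset.sum_neg_distrib, ← Finset.sum_sub_distrib]
        refine Finset.sum_congr rfl (fun q _ => ?_)
        ring
    _ = ∑ q, Pb X q r * (vt.2 q - ∑ p, ∑ s, Γ X p q s * vt.1 p * a s) := by
        rw [show ∑ q, Pb X q r * (vt.2 q - ∑ p, ∑ s, Γ X p q s * vt.1 p * a s)
            = ∑ q, (Pb X q r * vt.2 q - Pb X q r * (∑ p, ∑ s, Γ X p q s * vt.1 p * a s))
          from Finset.sum_congr rfl (fun q _ => by ring), Finset.sum_sub_distrib]
        abel
end PoissonPaper
end
end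

section
/- Let M be a manifold, π an arbitrary bivector field on M (not necessarily Poisson), and ∇ a classical connection on TM, with induced contravariant-type operators ∇̄_α(V) = π♯(∇_V(α)) + [π♯(α), V] on TM and ∇̄_α(β) = ∇_{π♯β}(α) + [α, β]_π on T*M. Then for all 1-forms α, β, ∇̄_α(π♯(β)) − π♯(∇̄_α(β)) = (1/2) i_{α∧β}([π, π]) viewed as the vector field ½[π,π](α, β, ·); in particular, the two induced operators intertwine via π♯ for all α, β if and only if the correction term i_{α∧β}([π, π]) vanishes, which holds when π is Poisson. -/
/-!
Formalization framework for "On the existence of symplectic realizations"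
(Crainic–Mărcuț).  We work on a chart: the Poisson manifold is an open set
`U ⊆ ℝⁿ` (with `Vec n := Fin n → ℝ`), its cotangent bundle is
`T*U = U × ℝⁿ ⊆ Pt n := Vec n × Vec n`, with bundle projection `Prod.fst`.
A bivector field is given by its components `Pb x p q = π_{pq}(x)`, a classical
connection on `TM` by its Christoffel symbols `Γ x p q r = Γ_{pq}^r(x)`.
-/

noncomputable section
open Set

namespace PoissonPaper

variable {n : ℕ}

/-! ### Auxiliary lemmas for the proof -/

section Aux
open Finset

lemma pd_congr {l : Fin n} {f g : Vec n → ℝ} {x : Vec n} (h : f =ᶠ[nhds x] g) :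
    pd l f x = pd l g x := by unfold pd; rw [h.fderiv_eq]

lemma pd_neg' {l : Fin n} (f : Vec n → ℝ) (x : Vec n) :
    pd l (fun y => -f y) x = - pd l f x := by
  unfold pd; rw [fderiv_fun_neg]; rfl

lemma pd_mul {l : Fin n} {f g : Vec n → ℝ} {x : Vec n}
    (hf : DifferentiableAt ℝ f x) (hg : DifferentiableAt ℝ g x) :
    pd l (fun y => f y * g y) x = f x * pd l g x + pd l f x * g x := by
  unfold pd; rw [fderiv_fun_mul hf hg]; simp [mul_comm]

lemma pd_sum {l : Fin n} {ι : Type*} (s : Finset ι) {f : ι → Vec n → ℝ} {x : Vec n}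
    (hf : ∀ i ∈ s, DifferentiableAt ℝ (f i) x) :
    pd l (fun y => ∑ i ∈ s, f i y) x = ∑ i ∈ s, pd l (f i) x := by
  unfold pd; rw [fderiv_fun_sum hf]; simp

lemma sum3_perm (F : Fin n → Fin n → Fin n → ℝ) :
    ∑ p, ∑ q, ∑ r, F p q r = ∑ r, ∑ q, ∑ p, F p q r := by
  calc ∑ p, ∑ q, ∑ r, F p q r
      = ∑ p, ∑ r, ∑ q, F p q r := Finset.sum_congr rfl fun p _ => Finset.sum_comm
    _ = ∑ r, ∑ p, ∑ q, F p q r := Finset.sum_comm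
    _ = ∑ r, ∑ q, ∑ p, F p q r := Finset.sum_congr rfl fun r _ => Finset.sum_comm

lemma koszul_core (a b : Fin n → ℝ) (P : Fin n → Fin n → ℝ)
    (dP : Fin n → Fin n → Fin n → ℝ) (da db : Fin n → Fin n → ℝ)
    (hP : ∀ i j, P j i = - P i j) (hdP : ∀ l i j, dP l j i = - dP l i j) (r : Fin n) :
    ((∑ p, ((∑ i, P i p * a i) * db p r + b p * (∑ i, (P i p * da r i + dP r i p * a i))))
    - (∑ p, ((∑ j, P j p * b j) * da p r + a p * (∑ j, (P j p * db r j + dP r j p * b j))))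
    - (∑ i, ∑ j, ((P i j * a i) * db r j + (P i j * da r i + dP r i j * a i) * b j)))
    = (∑ p, (∑ i, P i p * a i) * db p r) - (∑ p, (∑ j, P j p * b j) * da p r)
      + ∑ i, ∑ j, a i * b j * dP r i j := by
  have e1 : (∑ p, ((∑ i, P i p * a i) * db p r + b p * (∑ i, (P i p * da r i + dP r i p * a i))))
      = (∑ p, (∑ i, P i p * a i) * db p r)
        + ((∑ p, ∑ i, b p * (P i p * da r i)) + (∑ p, ∑ i, b p * (dP r i p * a i))) := by
    simp only [Finset.mul_sum, mul_add, Finset.sum_add_distrib]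
  have e2 : (∑ p, ((∑ j, P j p * b j) * da p r + a p * (∑ j, (P j p * db r j + dP r j p * b j))))
      = (∑ p, (∑ j, P j p * b j) * da p r)
        + ((∑ p, ∑ j, a p * (P j p * db r j)) + (∑ p, ∑ j, a p * (dP r j p * b j))) := by
    simp only [Finset.mul_sum, mul_add, Finset.sum_add_distrib]
  have e3 : (∑ i, ∑ j, ((P i j * a i) * db r j + (P i j * da r i + dP r i j * a i) * b j))
      = (∑ i, ∑ j, (P i j * a i) * db r j) + ((∑ i, ∑ j, (P i j * da r i) * b j)
        + (∑ i, ∑ j, (dP r i j * a i) * b j)) := by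
    simp only [add_mul, Finset.sum_add_distrib]
  have f1 : (∑ p, ∑ i, b p * (P i p * da r i)) = ∑ i, ∑ j, (P i j * da r i) * b j := by
    rw [Finset.sum_comm]
    exact sum_congr rfl fun i _ => sum_congr rfl fun p _ => by ring
  have f2 : (∑ p, ∑ j, a p * (P j p * db r j)) = -∑ i, ∑ j, (P i j * a i) * db r j := by
    rw [← Finset.sum_neg_distrib]
    refine sum_congr rfl fun i _ => ?_
    rw [← Finset.sum_neg_distrib]
    refine sum_congr rfl fun j _ => ?_
    rw [hP i j]; ring
  have g1 : (∑ p, ∑ i, b p * (dP r i p * a i)) = ∑ i, ∑ j, a i * b j * dP r i j := by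
    rw [Finset.sum_comm]
    exact sum_congr rfl fun i _ => sum_congr rfl fun p _ => by ring
  have g2 : (∑ p, ∑ j, a p * (dP r j p * b j)) = -∑ i, ∑ j, a i * b j * dP r i j := by
    rw [← Finset.sum_neg_distrib]
    refine sum_congr rfl fun i _ => ?_
    rw [← Finset.sum_neg_distrib]
    refine sum_congr rfl fun j _ => ?_
    rw [hdP r i j]; ring
  have g3 : (∑ i, ∑ j, (dP r i j * a i) * b j) = ∑ i, ∑ j, a i * b j * dP r i j :=
    sum_congr rfl fun i _ => sum_congr rfl fun j _ => by ring
  rw [e1, e2, e3, f1, f2, g1, g2, g3]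
  ring

lemma core (a b : Fin n → ℝ) (P : Fin n → Fin n → ℝ) (dP : Fin n → Fin n → Fin n → ℝ)
    (da db : Fin n → Fin n → ℝ)
    (hP : ∀ i j, P j i = - P i j) (hdP : ∀ l i j, dP l j i = - dP l i j) (s : Fin n) :
    (∑ p, ((∑ i, P i p * a i) * (∑ j, (P j s * db p j + dP p j s * b j))
        - (∑ j, P j p * b j) * (∑ i, (P i s * da p i + dP p i s * a i))))
    - ∑ r, P r s *
      ((∑ p, ((∑ i, P i p * a i) * db p r + b p * (∑ i, (P i p * da r i + dP r i p * a i))))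
      - (∑ p, ((∑ j, P j p * b j) * da p r + a p * (∑ j, (P j p * db r j + dP r j p * b j))))
      - (∑ i, ∑ j, ((P i j * a i) * db r j + (P i j * da r i + dP r i j * a i) * b j)))
    = ∑ i, ∑ j, a i * b j *
        ((1/2 : ℝ) * (-(2 * ∑ l, (P l i * dP l j s + P l j * dP l s i + P l s * dP l i j)))) := by
  have lieExp : (∑ p, ((∑ i, P i p * a i) * (∑ j, (P j s * db p j + dP p j s * b j))
        - (∑ j, P j p * b j) * (∑ i, (P i s * da p i + dP p i s * a i))))
      = ((∑ p, ∑ j, (∑ i, P i p * a i) * (P j s * db p j))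
          + (∑ p, ∑ j, (∑ i, P i p * a i) * (dP p j s * b j)))
        - ((∑ p, ∑ i, (∑ j, P j p * b j) * (P i s * da p i))
          + (∑ p, ∑ i, (∑ j, P j p * b j) * (dP p i s * a i))) := by
    simp only [Finset.mul_sum, mul_add, Finset.sum_add_distrib, Finset.sum_sub_distrib]
  have hKsum : (∑ r, P r s *
      ((∑ p, ((∑ i, P i p * a i) * db p r + b p * (∑ i, (P i p * da r i + dP r i p * a i))))
      - (∑ p, ((∑ j, P j p * b j) * da p r + a p * (∑ j, (P j p * db r j + dP r j p * b j))))
      - (∑ i, ∑ j, ((P i j * a i) * db r j + (P i j * da r i + dP r i j * a i) * b j))))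
      = ((∑ r, ∑ p, P r s * ((∑ i, P i p * a i) * db p r))
          - (∑ r, ∑ p, P r s * ((∑ j, P j p * b j) * da p r)))
        + (∑ r, ∑ i, ∑ j, P r s * (a i * b j * dP r i j)) := by
    calc (∑ r, P r s *
      ((∑ p, ((∑ i, P i p * a i) * db p r + b p * (∑ i, (P i p * da r i + dP r i p * a i))))
      - (∑ p, ((∑ j, P j p * b j) * da p r + a p * (∑ j, (P j p * db r j + dP r j p * b j))))
      - (∑ i, ∑ j, ((P i j * a i) * db r j + (P i j * da r i + dP r i j * a i) * b j))))
        = ∑ r, P r s * ((∑ p, (∑ i, P i p * a i) * db p r)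
            - (∑ p, (∑ j, P j p * b j) * da p r) + ∑ i, ∑ j, a i * b j * dP r i j) :=
          Finset.sum_congr rfl fun r _ => by
            rw [koszul_core a b P dP da db hP hdP r]
      _ = _ := by
          simp only [Finset.mul_sum, mul_sub, mul_add, Finset.sum_add_distrib,
            Finset.sum_sub_distrib]
  rw [lieExp, hKsum]
  have c1 : (∑ r, ∑ p, P r s * ((∑ i, P i p * a i) * db p r))
      = ∑ p, ∑ j, (∑ i, P i p * a i) * (P j s * db p j) := by
    rw [Finset.sum_comm]
    exact Finset.sum_congr rfl fun p _ => Finset.sum_congr rfl fun r _ => by ring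
  have c2 : (∑ r, ∑ p, P r s * ((∑ j, P j p * b j) * da p r))
      = ∑ p, ∑ i, (∑ j, P j p * b j) * (P i s * da p i) := by
    rw [Finset.sum_comm]
    exact Finset.sum_congr rfl fun p _ => Finset.sum_congr rfl fun r _ => by ring
  rw [c1, c2]
  have hL2 : (∑ p, ∑ j, (∑ i, P i p * a i) * (dP p j s * b j))
      = ∑ i, ∑ j, ∑ l, (P i l * a i) * (dP l j s * b j) := by
    simp only [Finset.sum_mul]
    exact sum3_perm _
  have hL4 : (∑ p, ∑ i, (∑ j, P j p * b j) * (dP p i s * a i))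
      = ∑ i, ∑ j, ∑ l, (P j l * b j) * (dP l i s * a i) := by
    simp only [Finset.sum_mul]
    rw [sum3_perm]
    exact Finset.sum_comm
  have hSC : (∑ r, ∑ i, ∑ j, P r s * (a i * b j * dP r i j))
      = ∑ i, ∑ j, ∑ l, P l s * (a i * b j * dP l i j) := by
    rw [sum3_perm]
    exact Finset.sum_comm
  have hRHS : (∑ i, ∑ j, a i * b j *
        ((1/2 : ℝ) * (-(2 * ∑ l, (P l i * dP l j s + P l j * dP l s i + P l s * dP l i j)))))
      = ∑ i, ∑ j, ∑ l, a i * b j *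
          (-(P l i * dP l j s + P l j * dP l s i + P l s * dP l i j)) := by
    refine Finset.sum_congr rfl fun i _ => Finset.sum_congr rfl fun j _ => ?_
    have h : ∀ S : ℝ, a i * b j * ((1/2 : ℝ) * (-(2 * S))) = a i * b j * (-S) := fun S => by ring
    rw [h, ← Finset.sum_neg_distrib, Finset.mul_sum]
  rw [hL2, hL4, hSC, hRHS]
  have comb : ∀ (F G H K : Fin n → Fin n → Fin n → ℝ),
      (∀ i j l, F i j l - G i j l - H i j l = K i j l) →
      ((∑ i, ∑ j, ∑ l, F i j l) - (∑ i, ∑ j, ∑ l, G i j l)) - (∑ i, ∑ j, ∑ l, H i j l)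
        = ∑ i, ∑ j, ∑ l, K i j l := by
    intro F G H K h
    simp only [← Finset.sum_sub_distrib]
    exact Finset.sum_congr rfl fun i _ => Finset.sum_congr rfl fun j _ =>
      Finset.sum_congr rfl fun l _ => h i j l
  have main : ((∑ i, ∑ j, ∑ l, (P i l * a i) * (dP l j s * b j))
        - (∑ i, ∑ j, ∑ l, (P j l * b j) * (dP l i s * a i)))
      - (∑ i, ∑ j, ∑ l, P l s * (a i * b j * dP l i j))
      = ∑ i, ∑ j, ∑ l, a i * b j *
          (-(P l i * dP l j s + P l j * dP l s i + P l s * dP l i j)) := by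
    refine comb _ _ _ _ fun i j l => ?_
    rw [hP i l, hP j l, hdP l i s]
    ring
  rw [← main]
  ring

lemma main_formula (U : Set (Vec n)) (hU : IsOpen U)
    (Pb : Vec n → Fin n → Fin n → ℝ) (hPb : IsBivectorOn U Pb)
    (Γ : Vec n → Fin n → Fin n → Fin n → ℝ)
    (α β : Vec n → Vec n) (hα : Smooth1F U α) (hβ : Smooth1F U β)
    (x : Vec n) (hx : x ∈ U) (s : Fin n) :
    nbarVF Pb Γ α (fun y => sharp Pb y (β y)) x s
      - sharp Pb x (nbar1F Pb Γ α β x) s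
    = ∑ i, ∑ j, α x i * β x j * ((1/2 : ℝ) * schouten Pb x i j s) := by
  have hPd : ∀ i j, DifferentiableAt ℝ (fun y => Pb y i j) x :=
    fun i j => ((hPb.1 i j).contDiffAt (hU.mem_nhds hx)).differentiableAt (by norm_num)
  have hαd : ∀ i, DifferentiableAt ℝ (fun y => α y i) x :=
    fun i => ((hα i).contDiffAt (hU.mem_nhds hx)).differentiableAt (by norm_num)
  have hβd : ∀ i, DifferentiableAt ℝ (fun y => β y i) x :=
    fun i => ((hβ i).contDiffAt (hU.mem_nhds hx)).differentiableAt (by norm_num)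
  have hPx : ∀ i j, Pb x j i = - Pb x i j := hPb.2 x hx
  have hdPx : ∀ l i j, pd l (fun y => Pb y j i) x = - pd l (fun y => Pb y i j) x := by
    intro l i j
    have hev : (fun y => Pb y j i) =ᶠ[nhds x] (fun y => -Pb y i j) :=
      Filter.eventually_of_mem (hU.mem_nhds hx) fun y hy => hPb.2 y hy i j
    rw [pd_congr hev, pd_neg']
  have pdA : ∀ (l p : Fin n), pd l (fun y => ∑ i, Pb y i p * α y i) x
      = ∑ i, (Pb x i p * pd l (fun y => α y i) x + pd l (fun y => Pb y i p) x * α x i) := by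
    intro l p
    rw [pd_sum Finset.univ (fun i _ => (hPd i p).fun_mul (hαd i))]
    exact Finset.sum_congr rfl fun i _ => pd_mul (hPd i p) (hαd i)
  have pdB : ∀ (l p : Fin n), pd l (fun y => ∑ j, Pb y j p * β y j) x
      = ∑ j, (Pb x j p * pd l (fun y => β y j) x + pd l (fun y => Pb y j p) x * β x j) := by
    intro l p
    rw [pd_sum Finset.univ (fun j _ => (hPd j p).fun_mul (hβd j))]
    exact Finset.sum_congr rfl fun j _ => pd_mul (hPd j p) (hβd j)
  have pdPair : ∀ r : Fin n, pd r (pbPair Pb α β) x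
      = ∑ i, ∑ j, ((Pb x i j * α x i) * pd r (fun y => β y j) x
          + (Pb x i j * pd r (fun y => α y i) x + pd r (fun y => Pb y i j) x * α x i)
            * β x j) := by
    intro r
    unfold pbPair
    rw [pd_sum Finset.univ
      (fun i _ => DifferentiableAt.fun_sum fun j _ => ((hPd i j).fun_mul (hαd i)).fun_mul (hβd j))]
    refine Finset.sum_congr rfl fun i _ => ?_
    rw [pd_sum Finset.univ (fun j _ => ((hPd i j).fun_mul (hαd i)).fun_mul (hβd j))]
    refine Finset.sum_congr rfl fun j _ => ?_
    rw [pd_mul ((hPd i j).fun_mul (hαd i)) (hβd j), pd_mul (hPd i j) (hαd i)]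
  have hcore := core (α x) (β x) (Pb x)
    (fun l i j => pd l (fun y => Pb y i j) x)
    (fun l i => pd l (fun y => α y i) x)
    (fun l j => pd l (fun y => β y j) x) hPx hdPx s
  simp only [nbarVF, nbar1F, lieVF, koszul, lieDer1, sharp, schouten, jacobiator,
    pdA, pdB, pdPair, mul_add, Finset.sum_add_distrib] at hcore ⊢
  linear_combination hcore

end Aux

/-- For an arbitrary bivector field `π` (not necessarily Poisson) and any
classical connection `∇` on `TM`, the induced operators `∇̄` on `TM` and
`T*M` satisfy
`∇̄_α(π♯(β)) − π♯(∇̄_α(β)) = (1/2) i_{α∧β}([π, π])`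
(the trivector `[π,π]` contracted with `α ∧ β`, viewed as a vector field).
In particular the two operators intertwine via `π♯` for all `α, β` iff the
correction term vanishes, which holds when `π` is Poisson. -/
theorem nbar_intertwining_defect_is_schouten
    {n : ℕ} (U : Set (Vec n)) (hU : IsOpen U)
    (Pb : Vec n → Fin n → Fin n → ℝ) (hPb : IsBivectorOn U Pb)
    (Γ : Vec n → Fin n → Fin n → Fin n → ℝ)
    (hΓ : ∀ p q r, ContDiffOn ℝ (⊤ : ℕ∞) (fun x => Γ x p q r) U) :
    (∀ α β : Vec n → Vec n, Smooth1F U α → Smooth1F U β → ∀ x ∈ U,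
      nbarVF Pb Γ α (fun y => sharp Pb y (β y)) x
          - sharp Pb x (nbar1F Pb Γ α β x)
        = fun s => ∑ i, ∑ j, α x i * β x j * ((1/2 : ℝ) * schouten Pb x i j s)) ∧
    ((∀ α β : Vec n → Vec n, Smooth1F U α → Smooth1F U β → ∀ x ∈ U,
        nbarVF Pb Γ α (fun y => sharp Pb y (β y)) x
          = sharp Pb x (nbar1F Pb Γ α β x))
      ↔ (∀ x ∈ U, ∀ i j k, schouten Pb x i j k = 0)) ∧
    (IsPoissonOn U Pb →
      ∀ α β : Vec n → Vec n, Smooth1F U α → Smooth1F U β → ∀ x ∈ U,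
        nbarVF Pb Γ α (fun y => sharp Pb y (β y)) x
          = sharp Pb x (nbar1F Pb Γ α β x)) := by
  have key := main_formula U hU Pb hPb Γ
  have part1 : ∀ α β : Vec n → Vec n, Smooth1F U α → Smooth1F U β → ∀ x ∈ U,
      nbarVF Pb Γ α (fun y => sharp Pb y (β y)) x
          - sharp Pb x (nbar1F Pb Γ α β x)
        = fun s => ∑ i, ∑ j, α x i * β x j * ((1/2 : ℝ) * schouten Pb x i j s) := by
    intro α β hα hβ x hx
    funext s
    simpa [Pi.sub_apply] using key α β hα hβ x hx s
  have part2 : (∀ α β : Vec n → Vec n, Smooth1F U α → Smooth1F U β → ∀ x ∈ U,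
        nbarVF Pb Γ α (fun y => sharp Pb y (β y)) x
          = sharp Pb x (nbar1F Pb Γ α β x))
      ↔ (∀ x ∈ U, ∀ i j k, schouten Pb x i j k = 0) := by
    constructor
    · intro h x hx i j k
      have hsm : ∀ v : Vec n, Smooth1F U (fun _ => v) := fun v q => contDiffOn_const
      have h1 := key (fun _ => Pi.single i 1) (fun _ => Pi.single j 1)
        (hsm _) (hsm _) x hx k
      have h2 := congrFun (h (fun _ => Pi.single i 1) (fun _ => Pi.single j 1)
        (hsm _) (hsm _) x hx) k
      rw [h2, sub_self] at h1
      simp [Pi.single_apply] at h1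
      linarith
    · intro h α β hα hβ x hx
      funext s
      have h1 := key α β hα hβ x hx s
      have hz : ∀ i j : Fin n, α x i * β x j * ((1/2 : ℝ) * schouten Pb x i j s) = 0 := by
        intro i j; rw [h x hx i j s]; ring
      simp only [hz, Finset.sum_const_zero] at h1
      linarith
  refine ⟨part1, part2, fun hpois => part2.mpr fun x hx i j k => ?_⟩
  simp [schouten, hpois.2 x hx i j k]

end PoissonPaper
end
end
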